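/- arXiv:2501.14444 — 10 statements merged into one kernel-verified Lean document; each statement's English description precedes it below -/
import Mathlib

section
/- Let F be an algebraically closed field of characteristic different from 2 and let n be a positive integer. Let M be a symmetric 2n×2n matrix over F and set A = Ω₀⁻¹ * M. Assume the characteristic polynomial of A is separable (i.e. A has 2n pairwise distinct eigenvalues). Then there exist a matrix Ψ over F with IsUnit Ψ.det and a function λ : Fin n → F such that Ψ⁻¹ * A * Ψ is the diagonal matrix whose entry at (i,0) is λ i and whose entry at (i,1) is -λ i, and such that (Ψᵀ * Ω₀ * Ψ) (i,a) (j,b) = 0 whenever i ≠ j (so Ψᵀ * Ω₀ * Ψ is block-diagonal with blocks of size two). -/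
open Matrix Polynomial

/-- The standard symplectic form on `F^(2n)`, with indices `Fin n × Fin 2`. -/
def OmegaStd (F : Type*) [Zero F] [One F] [Neg F] (n : ℕ) :
    Matrix (Fin n × Fin 2) (Fin n × Fin 2) F :=
  fun x y =>
    if x.1 = y.1 ∧ x.2 = 0 ∧ y.2 = 1 then 1
    else if x.1 = y.1 ∧ x.2 = 1 ∧ y.2 = 0 then -1
    else 0

section Aux
variable {F : Type*} [Field F] {n : ℕ}

private lemma omega_transpose : (OmegaStd F n)ᵀ = -(OmegaStd F n) := by
  ext ⟨i, a⟩ ⟨j, b⟩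
  simp only [transpose_apply, Matrix.neg_apply, OmegaStd]
  by_cases h : i = j
  · subst h; fin_cases a <;> fin_cases b <;> simp
  · simp [h, Ne.symm h]

private lemma omega_mul_omega : (OmegaStd F n) * (OmegaStd F n) = -1 := by
  ext ⟨i, a⟩ ⟨j, b⟩
  rw [mul_apply, Fintype.sum_prod_type]
  simp only [Fin.sum_univ_two]
  rw [Finset.sum_eq_single i]
  · simp only [OmegaStd, neg_apply, one_apply]
    by_cases h : i = j
    · subst h; fin_cases a <;> fin_cases b <;> simp
    · simp [h, Ne.symm h, Prod.ext_iff]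
  · intro k _ hk
    simp [OmegaStd, Ne.symm hk]
  · simp

private lemma my_eval_charpoly {m : Type*} [Fintype m] [DecidableEq m]
    (A : Matrix m m F) (r : F) :
    (Matrix.charpoly A).eval r = (r • (1 : Matrix m m F) - A).det := by
  rw [Matrix.charpoly, ← Polynomial.coe_evalRingHom, RingHom.map_det]
  congr 1
  ext i j
  by_cases h : i = j
  · subst h
    simp [charmatrix_apply_eq, Matrix.one_apply, Matrix.smul_apply]
  · simp [charmatrix_apply_ne _ _ _ h, Matrix.one_apply, h, Matrix.smul_apply]

private lemma pairing [DecidableEq F] (S : Finset F)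
    (h1 : ∀ x ∈ S, -x ∈ S) (h2 : ∀ x ∈ S, -x ≠ x) :
    ∃ (k : ℕ) (l : Fin k → F), S.card = 2 * k ∧ (∀ i, l i ∈ S) ∧
      (∀ i j, l i ≠ -l j) ∧ Function.Injective l := by
  induction S using Finset.strongInduction with
  | _ S ih =>
    rcases S.eq_empty_or_nonempty with rfl | ⟨a, ha⟩
    · exact ⟨0, Fin.elim0, by simp, fun i => i.elim0, fun i => i.elim0, fun i => i.elim0⟩
    · have hna : -a ∈ S := h1 a ha
      have hne : -a ≠ a := h2 a ha
      set S' := S \ {a, -a} with hS'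
      have hsub : S' ⊂ S := by
        refine Finset.sdiff_ssubset ?_ (by simp)
        intro x hx
        simp only [Finset.mem_insert, Finset.mem_singleton] at hx
        rcases hx with rfl | rfl <;> simpa
      have hmem' : ∀ x ∈ S', x ∈ S ∧ x ≠ a ∧ x ≠ -a := by
        intro x hx
        simp only [hS', Finset.mem_sdiff, Finset.mem_insert, Finset.mem_singleton, not_or] at hx
        tauto
      have h1' : ∀ x ∈ S', -x ∈ S' := by
        intro x hx
        obtain ⟨hxS, hxa, hxna⟩ := hmem' x hx
        simp only [hS', Finset.mem_sdiff, Finset.mem_insert, Finset.mem_singleton, not_or]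
        refine ⟨h1 x hxS, ?_, ?_⟩
        · intro h; exact hxna (by rw [← h, neg_neg])
        · intro h; exact hxa (neg_injective h)
      have h2' : ∀ x ∈ S', -x ≠ x := fun x hx => h2 x (hmem' x hx).1
      obtain ⟨k, l', hcard, hmem, hneg, hinj⟩ := ih S' hsub h1' h2'
      refine ⟨k + 1, Fin.cons a l', ?_, ?_, ?_, ?_⟩
      · have hc : S'.card = S.card - 2 := by
          rw [hS', Finset.card_sdiff_of_subset (by
            intro x hx; simp only [Finset.mem_insert, Finset.mem_singleton] at hx; rcases hx with rfl | rfl <;> assumption)]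
          simp [Finset.card_insert_of_notMem, Ne.symm hne]
        have h2le : 2 ≤ S.card := by
          have := Finset.card_le_card (show {a, -a} ⊆ S by
            intro x hx; simp only [Finset.mem_insert, Finset.mem_singleton] at hx
            rcases hx with rfl | rfl <;> assumption)
          simpa [Finset.card_insert_of_notMem, Ne.symm hne] using this
        omega
      · intro i
        refine Fin.cases ?_ ?_ i
        · simpa using ha
        · intro j; exact (hmem' _ (hmem j)).1
      · intro i j
        refine Fin.cases ?_ ?_ i <;> [skip; intro i'] <;> refine Fin.cases ?_ ?_ j
        · simpa using Ne.symm hne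
        · intro j'
          simp only [Fin.cons_zero, Fin.cons_succ]
          intro h
          exact (hmem' _ (h1' _ (hmem j'))).2.1 (by rw [← h])
        · simp only [Fin.cons_zero, Fin.cons_succ]
          exact (hmem' _ (hmem i')).2.2
        · intro j'; simpa using hneg i' j'
      · intro i j
        refine Fin.cases ?_ ?_ i <;> [skip; intro i'] <;> refine Fin.cases ?_ ?_ j <;>
          simp only [Fin.cons_zero, Fin.cons_succ]
        · simp
        · intro j' h; exact absurd h.symm (hmem' _ (hmem j')).2.1
        · intro h; exact absurd h (hmem' _ (hmem i')).2.1
        · intro j' h; exact congrArg Fin.succ (hinj h)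

end Aux

/-- Over an algebraically closed field of characteristic ≠ 2, if `A = Ω₀⁻¹ * M` has
pairwise distinct eigenvalues then it can be diagonalized with opposite eigenvalues
pairwise, by a basis in which `Ω₀` is block-diagonal with 2×2 blocks. -/
theorem eigenbasis_of_separable
    (F : Type*) [Field F] [IsAlgClosed F] (hchar : ringChar F ≠ 2)
    (n : ℕ) (hn : 0 < n)
    (M : Matrix (Fin n × Fin 2) (Fin n × Fin 2) F) (hM : Mᵀ = M)
    (hsep : ((OmegaStd F n)⁻¹ * M).charpoly.Separable) :
    ∃ (Ψ : Matrix (Fin n × Fin 2) (Fin n × Fin 2) F) (lam : Fin n → F),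
      IsUnit Ψ.det ∧
      Ψ⁻¹ * ((OmegaStd F n)⁻¹ * M) * Ψ =
        Matrix.diagonal (fun x : Fin n × Fin 2 => if x.2 = 0 then lam x.1 else -lam x.1) ∧
      ∀ (i j : Fin n) (a b : Fin 2), i ≠ j → (Ψᵀ * OmegaStd F n * Ψ) (i, a) (j, b) = 0 := by
  classical
  set Ω : Matrix (Fin n × Fin 2) (Fin n × Fin 2) F := OmegaStd F n with hΩdef
  set A : Matrix (Fin n × Fin 2) (Fin n × Fin 2) F := Ω⁻¹ * M with hAdef
  have hΩΩ : Ω * Ω = -1 := omega_mul_omega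
  have hΩT : Ωᵀ = -Ω := omega_transpose
  have hΩright : Ω * (-Ω) = 1 := by rw [mul_neg, hΩΩ, neg_neg]
  have hΩinv : Ω⁻¹ = -Ω := Matrix.inv_eq_right_inv hΩright
  have hΩA : Ω * A = M := by
    rw [hAdef, hΩinv, neg_mul, mul_neg, ← mul_assoc, hΩΩ, neg_mul, one_mul, neg_neg]
  have hHam : Ω * A = -(Aᵀ * Ω) := by
    have h1 : Aᵀ * Ωᵀ = M := by rw [← transpose_mul, hΩA, hM]
    rw [hΩT, mul_neg] at h1
    rw [hΩA, ← h1]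
  -- root negation
  set p := A.charpoly with hp
  have hroot : ∀ r : F, p.IsRoot r → p.IsRoot (-r) := by
    intro r hr
    rw [IsRoot, my_eval_charpoly] at hr ⊢
    have hconj : Ω * (r • (1 : Matrix (Fin n × Fin 2) (Fin n × Fin 2) F) - A)
        = -((((-r) • (1 : Matrix (Fin n × Fin 2) (Fin n × Fin 2) F) - A))ᵀ * Ω) := by
      have ht : (((-r) • (1 : Matrix (Fin n × Fin 2) (Fin n × Fin 2) F) - A))ᵀ
          = (-r) • 1 - Aᵀ := by rw [transpose_sub, transpose_smul, transpose_one]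
      rw [ht, sub_mul, mul_sub, Matrix.mul_smul, mul_one, Matrix.smul_mul, one_mul, hHam,
        sub_neg_eq_add, neg_smul, neg_sub, sub_neg_eq_add, add_comm]
    have hdet := congrArg Matrix.det hconj
    rw [det_mul, Matrix.det_neg, det_mul, det_transpose, hr, mul_zero] at hdet
    have hcard : (-1 : F) ^ Fintype.card (Fin n × Fin 2) = 1 :=
      Even.neg_one_pow (by
        rw [Fintype.card_prod, Fintype.card_fin, Fintype.card_fin]
        exact ⟨n, by ring⟩)
    rw [hcard, one_mul] at hdet
    have hΩdet : IsUnit Ω.det := Matrix.isUnit_det_of_right_inverse hΩright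
    rcases mul_eq_zero.mp hdet.symm with h | h
    · exact h
    · exact absurd h hΩdet.ne_zero
  have hpne : p ≠ 0 := (Matrix.charpoly_monic A).ne_zero
  have hdeg : p.natDegree = n * 2 := by
    rw [hp, Matrix.charpoly_natDegree_eq_dim, Fintype.card_prod, Fintype.card_fin,
      Fintype.card_fin]
  have hnodup : p.roots.Nodup := Polynomial.nodup_roots hsep
  set R : Finset F := p.roots.toFinset with hR
  have hcardR : R.card = n * 2 := by
    rw [hR, Multiset.toFinset_card_of_nodup hnodup,
      splits_iff_card_roots.mp (IsAlgClosed.splits p), hdeg]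
  have hmemR : ∀ x : F, x ∈ R ↔ p.IsRoot x := by
    intro x
    rw [hR, Multiset.mem_toFinset, mem_roots']
    exact ⟨fun h => h.2, fun h => ⟨hpne, h⟩⟩
  have hclos : ∀ x ∈ R, -x ∈ R := by
    intro x hx
    rw [hmemR] at hx ⊢
    exact hroot x hx
  have htwo : (2 : F) ≠ 0 := Ring.two_ne_zero hchar
  have hzero : (0 : F) ∉ R := by
    intro h0
    have h1' : ∀ x ∈ R.erase 0, -x ∈ R.erase 0 := by
      intro x hx
      rw [Finset.mem_erase] at hx ⊢
      exact ⟨neg_ne_zero.mpr hx.1, hclos x hx.2⟩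
    have h2' : ∀ x ∈ R.erase 0, -x ≠ x := by
      intro x hx h
      rw [Finset.mem_erase] at hx
      apply hx.1
      have : (2 : F) * x = 0 := by linear_combination -h
      exact (mul_eq_zero.mp this).resolve_left htwo
    obtain ⟨k, l, hcard, -⟩ := pairing (R.erase 0) h1' h2'
    rw [Finset.card_erase_of_mem h0, hcardR] at hcard
    omega
  have h2R : ∀ x ∈ R, -x ≠ x := by
    intro x hx h
    apply hzero
    have hx0 : x = 0 := by
      have : (2 : F) * x = 0 := by linear_combination -h
      exact (mul_eq_zero.mp this).resolve_left htwo
    rwa [← hx0]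
  obtain ⟨k, l, hcard, hlR, hlneg, hlinj⟩ := pairing R hclos h2R
  have hkn : n = k := by rw [hcardR] at hcard; omega
  subst hkn
  -- the eigenvalue function
  set d : (Fin n × Fin 2) → F := fun x => if x.2 = 0 then l x.1 else -l x.1 with hd
  have hd_root : ∀ x, p.IsRoot (d x) := by
    rintro ⟨i, a⟩
    by_cases h : a = 0
    · simpa [hd, h, hmemR] using (hmemR _).mp (hlR i)
    · simp only [hd, h, if_neg]
      exact (hmemR _).mp (hclos _ (hlR i))
  have hd0 : ∀ i : Fin n, d (i, 0) = l i := fun i => if_pos rfl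
  have hd1 : ∀ i : Fin n, d (i, 1) = -l i := fun i => if_neg (by simp)
  have hfin2 : ∀ c : Fin 2, c = 0 ∨ c = 1 := by decide
  have hd_inj : Function.Injective d := by
    rintro ⟨i, a⟩ ⟨j, b⟩ h
    rcases hfin2 a with rfl | rfl <;> rcases hfin2 b with rfl | rfl
    · rw [hd0, hd0] at h; rw [hlinj h]
    · rw [hd0, hd1] at h; exact absurd h (hlneg i j)
    · rw [hd1, hd0] at h; exact absurd h.symm (hlneg j i)
    · rw [hd1, hd1] at h; rw [hlinj (neg_injective h)]
  -- eigenvectors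
  have hev : ∀ x : Fin n × Fin 2, ∃ w : (Fin n × Fin 2) → F, w ≠ 0 ∧
      A.mulVec w = d x • w := by
    intro x
    have hdet0 : ((d x) • (1 : Matrix (Fin n × Fin 2) (Fin n × Fin 2) F) - A).det = 0 := by
      rw [← my_eval_charpoly]; exact hd_root x
    obtain ⟨w, hw0, hweq⟩ := Matrix.exists_mulVec_eq_zero_iff.mpr hdet0
    refine ⟨w, hw0, ?_⟩
    rw [Matrix.sub_mulVec, Matrix.smul_mulVec, Matrix.one_mulVec, sub_eq_zero] at hweq
    exact hweq.symm
  choose v hv0 hveig using hev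
  set Ψ : Matrix (Fin n × Fin 2) (Fin n × Fin 2) F := Matrix.of fun r c => v c r with hΨdef
  have hli : LinearIndependent F v := by
    apply Module.End.eigenvectors_linearIndependent' (Matrix.mulVecLin A) d hd_inj
    intro x
    refine ⟨?_, hv0 x⟩
    rw [Module.End.mem_eigenspace_iff]
    simpa [Matrix.mulVecLin_apply] using hveig x
  have hunitΨ : IsUnit Ψ := by
    rw [← Matrix.linearIndependent_cols_iff_isUnit]
    exact hli
  have hdetΨ : IsUnit Ψ.det := (Matrix.isUnit_iff_isUnit_det Ψ).mp hunitΨ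
  have hAΨ : A * Ψ = Ψ * Matrix.diagonal d := by
    ext r c
    rw [mul_apply, Matrix.mul_diagonal]
    have h1 := congrFun (hveig c) r
    simp only [Matrix.mulVec, dotProduct, Pi.smul_apply, smul_eq_mul] at h1
    rw [hΨdef]
    simpa [mul_comm] using h1
  refine ⟨Ψ, l, hdetΨ, ?_, ?_⟩
  · rw [mul_assoc, hAΨ, ← mul_assoc, Matrix.nonsing_inv_mul Ψ hdetΨ, one_mul]
  · intro i j a b hij
    set W : Matrix (Fin n × Fin 2) (Fin n × Fin 2) F := Ψᵀ * Ω * Ψ with hW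
    show W (i, a) (j, b) = 0
    have hWT : Wᵀ = -W := by
      rw [hW, transpose_mul, transpose_mul, transpose_transpose, hΩT, neg_mul, mul_neg,
        mul_assoc]
    have hWD : W * Matrix.diagonal d = Ψᵀ * M * Ψ := by
      rw [hW, mul_assoc (Ψᵀ * Ω) Ψ _, ← hAΨ, ← mul_assoc, mul_assoc Ψᵀ Ω A, hΩA]
    have hsym : (Ψᵀ * M * Ψ)ᵀ = Ψᵀ * M * Ψ := by
      rw [transpose_mul, transpose_mul, transpose_transpose, hM, mul_assoc]
    have hanti : W * Matrix.diagonal d = -(Matrix.diagonal d * W) := by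
      have h1 : (W * Matrix.diagonal d)ᵀ = W * Matrix.diagonal d := by rw [hWD]; exact hsym
      rw [transpose_mul, diagonal_transpose, hWT, mul_neg] at h1
      exact h1.symm
    have h2 := congrFun (congrFun hanti (i, a)) (j, b)
    simp only [Matrix.mul_diagonal, Matrix.diagonal_mul, Matrix.neg_apply] at h2
    have hsum : d (i, a) + d (j, b) ≠ 0 := by
      rcases hfin2 a with rfl | rfl <;> rcases hfin2 b with rfl | rfl <;>
        [rw [hd0, hd0]; rw [hd0, hd1]; rw [hd1, hd0]; rw [hd1, hd1]] <;> intro h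
      · exact hlneg i j (by linear_combination h)
      · exact hij (hlinj (by linear_combination h))
      · exact hij (hlinj (by linear_combination -h))
      · exact hlneg i j (by linear_combination -h)
    have h3 : W (i, a) (j, b) * (d (i, a) + d (j, b)) = 0 := by linear_combination h2
    rcases mul_eq_zero.mp h3 with h | h
    · exact h
    · exact absurd h hsum
end

section
/- Let F be a field, let n be a positive integer, let M be a symmetric 2n×2n matrix over F, and set A = Ω₀⁻¹ * M. Then the characteristic polynomial of A equals the characteristic polynomial of -A (equivalently, det(X·I − A) = det(X·I + A), so the eigenvalues of A come in opposite pairs). -/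
open Matrix

open Polynomial in
lemma my_charpoly_transpose {R : Type*} [CommRing R] {m : Type*} [DecidableEq m] [Fintype m]
    (A : Matrix m m R) : Aᵀ.charpoly = A.charpoly := by
  rw [charpoly, charpoly, ← det_transpose (charmatrix A)]
  congr 1
  ext i j
  simp [charmatrix, transpose_apply, diagonal_apply, eq_comm]

open Polynomial in
lemma my_charpoly_conj {R : Type*} [CommRing R] {m : Type*} [DecidableEq m] [Fintype m]
    (P N A : Matrix m m R) (h1 : P * N = 1) :
    (P * A * N).charpoly = A.charpoly := by
  have hPN : P.map (C : R →+* R[X]) * N.map C = 1 := by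
    rw [← Matrix.map_mul, h1, Matrix.map_one _ (map_zero C) (map_one C)]
  have hc : charmatrix (P * A * N) = P.map C * charmatrix A * N.map C := by
    rw [charmatrix, charmatrix]
    simp only [RingHom.mapMatrix_apply]
    have hmap : (P * A * N).map (C : R →+* R[X]) = P.map C * A.map C * N.map C := by
      simp [Matrix.map_mul]
    rw [hmap, mul_sub, sub_mul]
    congr 1
    rw [mul_assoc, (scalar_commute (X : R[X]) (fun r' => Commute.all _ _) (N.map C)).eq,
      ← mul_assoc, hPN, one_mul]
  rw [charpoly, charpoly, hc, det_mul, det_mul]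
  have h : (P.map (C : R →+* R[X])).det * (N.map C).det = 1 := by
    rw [← det_mul, hPN, det_one]
  calc (P.map C).det * (charmatrix A).det * (N.map C).det
      = (P.map C).det * (N.map C).det * (charmatrix A).det := by ring
    _ = (charmatrix A).det := by rw [h, one_mul]

lemma OmegaStd_mul_self (F : Type*) [Field F] (n : ℕ) :
    (OmegaStd F n) * (OmegaStd F n) = -1 := by
  ext ⟨i, a⟩ ⟨j, b⟩
  simp only [mul_apply, OmegaStd, Fintype.sum_prod_type, Fin.sum_univ_two, one_apply, neg_apply]
  rcases eq_or_ne i j with h | h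
  · subst h
    fin_cases a <;> fin_cases b <;> simp [Finset.sum_ite_eq, Prod.ext_iff]
  · fin_cases a <;> fin_cases b <;> simp [Finset.sum_ite_eq, Prod.ext_iff, h]

lemma OmegaStd_transpose (F : Type*) [Field F] (n : ℕ) :
    (OmegaStd F n)ᵀ = -(OmegaStd F n) := by
  ext ⟨i, a⟩ ⟨j, b⟩
  simp only [transpose_apply, OmegaStd, Matrix.neg_apply]
  rcases eq_or_ne i j with h | h
  · subst h; fin_cases a <;> fin_cases b <;> simp
  · simp [h, Ne.symm h]

/-- The eigenvalues of `Ω₀⁻¹ * M` come in opposite pairs: the characteristic polynomial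
of `A = Ω₀⁻¹ * M` equals that of `-A`. -/
theorem charpoly_neg_of_symmetric
    (F : Type*) [Field F] (n : ℕ) (hn : 0 < n)
    (M : Matrix (Fin n × Fin 2) (Fin n × Fin 2) F) (hM : Mᵀ = M) :
    ((OmegaStd F n)⁻¹ * M).charpoly = (-((OmegaStd F n)⁻¹ * M)).charpoly := by
  set Ω := OmegaStd F n with hΩdef
  have hΩ2 : Ω * Ω = -1 := OmegaStd_mul_self F n
  have h1 : Ω * (-Ω) = 1 := by rw [mul_neg, hΩ2, neg_neg]
  have hinv : Ω⁻¹ = -Ω := inv_eq_right_inv h1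
  rw [hinv]
  have hL : -(-Ω * M) = Ω * M := by rw [neg_mul, neg_neg]
  have hR : (-Ω) * M = -(Ω * M) := by rw [neg_mul]
  rw [hL, hR]
  -- Goal: (-(Ω * M)).charpoly = (Ω * M).charpoly
  have hconj : Ω * (-(M * Ω)) * (-Ω) = -(Ω * M) := by
    calc Ω * (-(M * Ω)) * (-Ω) = Ω * (M * (Ω * Ω)) := by
          simp only [mul_neg, neg_mul, neg_neg, mul_assoc]
      _ = -(Ω * M) := by rw [hΩ2, mul_neg_one, mul_neg]
  have htr : (Ω * M)ᵀ = -(M * Ω) := by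
    rw [transpose_mul, hM, OmegaStd_transpose, mul_neg]
  calc (-(Ω * M)).charpoly
      = (Ω * (-(M * Ω)) * (-Ω)).charpoly := by rw [hconj]
    _ = (-(M * Ω)).charpoly := my_charpoly_conj _ _ _ h1
    _ = ((Ω * M)ᵀ).charpoly := by rw [htr]
    _ = (Ω * M).charpoly := my_charpoly_transpose _
end

section
/- Let F be a field of characteristic different from 2, let M be a symmetric 2×2 matrix over F, and let λ ∈ F with λ ≠ 0 be such that the characteristic polynomial of Ω₀⁻¹ * M equals X² − C(λ²). Then there exists a symplectic matrix S over F with Sᵀ * M * S = !![0, λ; λ, 0]. -/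
open Matrix Polynomial

/-- The standard symplectic 2×2 matrix. -/
def Omega2 (F : Type*) [Zero F] [One F] [Neg F] : Matrix (Fin 2) (Fin 2) F :=
  !![0, 1; -1, 0]

/-- A 2×2 matrix with determinant 1 is symplectic. -/
lemma symplectic_of_det_one {F : Type*} [Field F] (S : Matrix (Fin 2) (Fin 2) F)
    (h : S.det = 1) : Sᵀ * Omega2 F * S = Omega2 F := by
  rw [Matrix.det_fin_two] at h
  ext i j
  fin_cases i <;> fin_cases j <;>
    simp [Omega2, Matrix.mul_apply, Fin.sum_univ_succ] <;>
    first | linear_combination h | linear_combination -h | linear_combination 2 * h | ring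

/-- If the eigenvalues `±λ` of `Ω₀⁻¹ * M` lie in the base field and are nonzero,
then `M` is symplectically equivalent to the hyperbolic normal form `!![0, λ; λ, 0]`. -/
theorem hyperbolic_normal_form
    (F : Type*) [Field F] (hchar : ringChar F ≠ 2)
    (M : Matrix (Fin 2) (Fin 2) F) (hM : Mᵀ = M)
    (lam : F) (hlam : lam ≠ 0)
    (hchp : ((Omega2 F)⁻¹ * M).charpoly = X ^ 2 - C (lam ^ 2)) :
    ∃ S : Matrix (Fin 2) (Fin 2) F,
      Sᵀ * Omega2 F * S = Omega2 F ∧ Sᵀ * M * S = !![0, lam; lam, 0] := by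
  have h2 : (2 : F) ≠ 0 := Ring.two_ne_zero hchar
  have h4 : (4 : F) ≠ 0 := by
    have := pow_ne_zero 2 h2; norm_num at this; exact this
  have h8 : (8 : F) ≠ 0 := by
    have := pow_ne_zero 3 h2; norm_num at this; exact this
  have hdetO : (Omega2 F).det = 1 := by simp [Omega2, Matrix.det_fin_two_of]
  have hdetM : M.det = -lam ^ 2 := by
    have h1 : ((Omega2 F)⁻¹ * M).det = M.det := by
      rw [Matrix.det_mul, Matrix.det_nonsing_inv, hdetO]; simp
    have h2' := Matrix.det_eq_sign_charpoly_coeff ((Omega2 F)⁻¹ * M)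
    rw [hchp, h1] at h2'
    simp only [Fintype.card_fin, coeff_sub, coeff_X_pow, coeff_C] at h2'
    norm_num at h2'
    exact h2'
  have hb10 : M 1 0 = M 0 1 := by
    conv_lhs => rw [← hM]
    rfl
  obtain ⟨a, b, c, rfl⟩ : ∃ a b c, M = !![a, b; b, c] :=
    ⟨M 0 0, M 0 1, M 1 1, by
      ext i j
      fin_cases i <;> fin_cases j <;> simp [hb10]⟩
  have hdet : a * c - b * b = -lam ^ 2 := by
    rw [Matrix.det_fin_two_of] at hdetM
    exact hdetM
  rcases eq_or_ne a 0 with ha | ha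
  · have hbb : (b - lam) * (b + lam) = 0 := by
      rw [ha] at hdet; ring_nf; linear_combination -hdet
    rcases mul_eq_zero.mp hbb with h | h
    · have hb : b = lam := sub_eq_zero.mp h
      refine ⟨!![1, -c/(2*lam); 0, 1], symplectic_of_det_one _ (by simp [Matrix.det_fin_two]), ?_⟩
      ext i j
      fin_cases i <;> fin_cases j <;>
        simp [Matrix.mul_apply, Fin.sum_univ_succ, ha, hb] <;>
        field_simp <;> try ring
    · have hb : b = -lam := eq_neg_of_add_eq_zero_left h
      refine ⟨!![c/(2*lam), -1; 1, 0], symplectic_of_det_one _ (by simp [Matrix.det_fin_two]), ?_⟩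
      ext i j
      fin_cases i <;> fin_cases j <;>
        simp [Matrix.mul_apply, Fin.sum_univ_succ, ha, hb] <;>
        field_simp <;> try ring
  · have hcc : c = (b * b - lam ^ 2) / a := by field_simp; linear_combination hdet
    subst hcc
    refine ⟨!![(-lam - b)/a, (b - lam)/(2*lam); 1, -a/(2*lam)],
      symplectic_of_det_one _ (by rw [Matrix.det_fin_two_of]; field_simp; ring), ?_⟩
    ext i j
    fin_cases i <;> fin_cases j <;>
      simp [Matrix.mul_apply, Fin.sum_univ_succ]
    all_goals field_simp
    any_goals ring
    all_goals field_simp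
    all_goals ring
end

section
/- Let F be a field of characteristic different from 2 and let a, b, c, d ∈ F with b² = a·c, a ≠ 0 and d ≠ 0. Let M = !![a, b; b, c]. Then there exists a symplectic matrix S over F with Sᵀ * M * S = !![d, 0; 0, 0] if and only if a·d is a square in F. -/
open Matrix

/-- A degenerate symmetric 2×2 matrix `!![a, b; b, c]` with `b² = a·c` is symplectically
equivalent to `!![d, 0; 0, 0]` if and only if `a·d` is a square. -/
theorem degenerate_normal_form_iff_isSquare
    (F : Type*) [Field F] (hchar : ringChar F ≠ 2)
    (a b c d : F) (hb : b ^ 2 = a * c) (ha : a ≠ 0) (hd : d ≠ 0) :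
    (∃ S : Matrix (Fin 2) (Fin 2) F,
      Sᵀ * Omega2 F * S = Omega2 F ∧ Sᵀ * !![a, b; b, c] * S = !![d, 0; 0, 0]) ↔
    IsSquare (a * d) := by
  constructor
  · rintro ⟨S, -, hM⟩
    have h00 := congrArg (fun m => m 0 0) hM
    simp [Matrix.mul_apply, Fin.sum_univ_two] at h00
    exact ⟨a * S 0 0 + b * S 1 0, by linear_combination -a * h00 - S 1 0 ^ 2 * hb⟩
  · rintro ⟨t, ht⟩
    have hadt : a * d ≠ 0 := mul_ne_zero ha hd
    have htz : t ≠ 0 := by rintro rfl; exact hadt (by rw [ht]; ring)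
    have hc : c = b ^ 2 / a := by field_simp [hb]; linear_combination -hb
    have hd2 : d = t * t / a := by field_simp [← ht]; linear_combination ht
    subst hc hd2
    refine ⟨!![t / a, -b / t; 0, a / t], ?_, ?_⟩ <;>
      · ext i j
        fin_cases i <;> fin_cases j <;>
          simp [Matrix.mul_apply, Fin.sum_univ_two, Omega2, Matrix.vecHead, Matrix.vecTail] <;>
          first
            | tauto
            | (field_simp <;> (first | ring1 | tauto | (left; ring1)))
end

section
/- Let F be a field of characteristic different from 2, let e ∈ F be a non-square, and let K be a field with an F-algebra structure containing an element λ with λ² = algebraMap F K e, such that every element of K equals algebraMap F K x + (algebraMap F K y) * λ for some x, y ∈ F. Let σ : K ≃ₐ[F] K be an F-algebra automorphism with σ(λ) = -λ. Let M be a symmetric 2×2 matrix over F such that A := Ω₀⁻¹ * M has characteristic polynomial X² − C e, and let u : Fin 2 → K be a nonzero vector with (A mapped entrywise into K).mulVec u = λ • u. Then for all a, b ∈ F the following are equivalent: (i) there exists a symplectic matrix S over F with Sᵀ * M * S = !![a, 0; 0, b]; (ii) e = −(a*b) and there exist x, y ∈ F such that 2 * λ * algebraMap F K a = (algebraMap F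 K (x² − e*y²)) * w, where w := u 0 * σ(u 1) − u 1 * σ(u 0) is the symplectic pairing uᵀ * Ω₀ * (σ ∘ u) computed in K. -/
open Matrix Polynomial

set_option maxHeartbeats 1000000 in
/-- Criterion for a symmetric 2×2 matrix whose associated matrix `A = Ω₀⁻¹M` has
eigenvalues `±λ` in a quadratic extension `K = F[λ]`, `λ² = e` a non-square of `F`,
to be symplectically equivalent to the diagonal form `!![a, 0; 0, b]`. -/
theorem elliptic_normal_form_iff
    (F K : Type*) [Field F] [Field K] [Algebra F K]
    (hchar : ringChar F ≠ 2)
    (e : F) (he : ¬ IsSquare e)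
    (lam : K) (hlam : lam ^ 2 = algebraMap F K e)
    (hK : ∀ z : K, ∃ x y : F, z = algebraMap F K x + algebraMap F K y * lam)
    (σ : K ≃ₐ[F] K) (hσ : σ lam = -lam)
    (M : Matrix (Fin 2) (Fin 2) F) (hM : Mᵀ = M)
    (hchp : ((Omega2 F)⁻¹ * M).charpoly = X ^ 2 - C e)
    (u : Fin 2 → K) (hu : u ≠ 0)
    (huA : (((Omega2 F)⁻¹ * M).map (algebraMap F K)).mulVec u = lam • u)
    (a b : F) :
    (∃ S : Matrix (Fin 2) (Fin 2) F,
        Sᵀ * Omega2 F * S = Omega2 F ∧ Sᵀ * M * S = !![a, 0; 0, b]) ↔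
    (e = -(a * b) ∧ ∃ x y : F,
        2 * lam * algebraMap F K a =
          algebraMap F K (x ^ 2 - e * y ^ 2) * (u 0 * σ (u 1) - u 1 * σ (u 0))) := by
  have hinj : Function.Injective (algebraMap F K) := (algebraMap F K).injective
  have h2F : (2:F) ≠ 0 := Ring.two_ne_zero hchar
  have he0 : e ≠ 0 := fun h => he ⟨0, by simp [h]⟩
  have heK : algebraMap F K e ≠ 0 := fun h => he0 (hinj (by simpa using h))
  have hlam0 : lam ≠ 0 := fun h => heK (by rw [← hlam, h]; ring)
  have h2K : (2:K) ≠ 0 := fun h => h2F (hinj (by rw [_root_.map_ofNat, _root_.map_zero]; exact h))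
  have hlamF : ∀ t : F, lam ≠ algebraMap F K t := by
    intro t h
    refine he ⟨t, hinj ?_⟩
    rw [← hlam, h, _root_.map_mul]; ring
  have hσσ : ∀ z : K, σ (σ z) = z := by
    intro z
    obtain ⟨x, y, rfl⟩ := hK z
    simp only [_root_.map_add, _root_.map_mul, _root_.map_neg, AlgEquiv.commutes, hσ, neg_neg]
  have hfix : ∀ z : K, σ z = z → ∃ t : F, z = algebraMap F K t := by
    intro z hz
    obtain ⟨x, y, rfl⟩ := hK z
    simp only [_root_.map_add, _root_.map_mul, AlgEquiv.commutes, hσ] at hz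
    have hy2 : algebraMap F K y * lam = 0 := by
      have h2 : (2:K) * (algebraMap F K y * lam) = 0 := by linear_combination -hz
      exact (mul_eq_zero.mp h2).resolve_left h2K
    have hy : algebraMap F K y = 0 := (mul_eq_zero.mp hy2).resolve_right hlam0
    have hy0 : y = 0 := hinj (by rw [hy, _root_.map_zero])
    exact ⟨x, by simp [hy0]⟩
  have hM10 : M 1 0 = M 0 1 := by
    have h := congrFun (congrFun hM 1) 0
    simpa [Matrix.transpose_apply] using h.symm
  obtain ⟨m, n, p, rfl⟩ : ∃ m n p, M = !![m, n; n, p] :=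
    ⟨M 0 0, M 0 1, M 1 1, by ext i j; fin_cases i <;> fin_cases j <;> simp [hM10]⟩
  have hOinv : (Omega2 F)⁻¹ = !![0,-1;1,0] := by
    apply inv_eq_right_inv
    simp [Omega2, Matrix.mul_fin_two, Matrix.one_fin_two]
  have hA : (Omega2 F)⁻¹ * !![m,n;n,p] = !![-n,-p;m,n] := by
    rw [hOinv]; simp [Matrix.mul_fin_two]
  rw [hA] at hchp huA
  have hdet : m * p - n * n = -e := by
    have h := Matrix.det_eq_sign_charpoly_coeff (!![-n,-p;m,n])
    rw [hchp] at h
    simp [Matrix.det_fin_two_of] at h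
    linear_combination h
  have E0 := congrFun huA 0
  have E1 := congrFun huA 1
  simp [Matrix.mulVec, dotProduct, Fin.sum_univ_two] at E0 E1
  have sE0 := congrArg σ E0
  have sE1 := congrArg σ E1
  simp only [_root_.map_add, _root_.map_mul, _root_.map_neg, AlgEquiv.commutes, hσ] at sE0 sE1
  have hU0 : u 0 ≠ 0 := by
    intro h0
    have h1 : u 1 ≠ 0 := by
      intro h1; exact hu (funext fun i => by fin_cases i <;> simpa)
    apply hlamF n
    have h2 : lam * u 1 = algebraMap F K n * u 1 := by
      rw [h0] at E1; linear_combination -E1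
    exact mul_right_cancel₀ h1 h2
  have hU1 : u 1 ≠ 0 := by
    intro h1
    apply hlamF (-n)
    have h2 : lam * u 0 = algebraMap F K (-n) * u 0 := by
      rw [_root_.map_neg]
      rw [h1] at E0; linear_combination -E0
    exact mul_right_cancel₀ hU0 h2
  have hσU0 : σ (u 0) ≠ 0 := fun h => hU0 (by
    have := congrArg σ h; rw [hσσ, _root_.map_zero] at this; exact this)
  have hw0 : u 0 * σ (u 1) - u 1 * σ (u 0) ≠ 0 := by
    intro hw
    have hr : σ (u 1 / u 0) = u 1 / u 0 := by
      rw [map_div₀, div_eq_div_iff hσU0 hU0]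
      linear_combination hw
    obtain ⟨t, ht⟩ := hfix _ hr
    rw [div_eq_iff hU0] at ht
    apply hlamF (-(n + p*t))
    have h2 : lam * u 0 = algebraMap F K (-(n + p*t)) * u 0 := by
      simp only [_root_.map_neg, _root_.map_add, _root_.map_mul]
      linear_combination -E0 - algebraMap F K p * ht
    exact mul_right_cancel₀ hU0 h2
  -- w = c * lam
  obtain ⟨cx, c, hwxy⟩ := hK (u 0 * σ (u 1) - u 1 * σ (u 0))
  have hσw : σ (u 0 * σ (u 1) - u 1 * σ (u 0)) = -(u 0 * σ (u 1) - u 1 * σ (u 0)) := by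
    simp only [_root_.map_sub, _root_.map_mul, hσσ]; ring
  have hcx : cx = 0 := by
    rw [hwxy] at hσw
    simp only [_root_.map_add, _root_.map_mul, AlgEquiv.commutes, hσ] at hσw
    have h2 : (2:K) * algebraMap F K cx = 0 := by linear_combination hσw
    have h3 : algebraMap F K cx = 0 := (mul_eq_zero.mp h2).resolve_left h2K
    exact hinj (by rw [h3, _root_.map_zero])
  rw [hcx] at hwxy
  have hw : u 0 * σ (u 1) - u 1 * σ (u 0) = algebraMap F K c * lam := by
    rw [hwxy]; simp
  have hc0 : c ≠ 0 := by
    intro h; apply hw0; rw [hw, h]; simp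
  have hcK : algebraMap F K c ≠ 0 := fun h => hc0 (hinj (by rw [h, _root_.map_zero]))
  -- the three bilinear identities
  have hq1 : algebraMap F K m * (u 0 * σ (u 1) - u 1 * σ (u 0)) = 2 * lam * (u 1 * σ (u 1)) := by
    linear_combination σ (u 1) * E1 - u 1 * sE1
  have hq2 : algebraMap F K p * (u 0 * σ (u 1) - u 1 * σ (u 0)) = 2 * lam * (u 0 * σ (u 0)) := by
    linear_combination σ (u 0) * E0 - u 0 * sE0
  have hq3 : 2 * algebraMap F K n * (u 0 * σ (u 1) - u 1 * σ (u 0))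
      = -(2 * lam * (u 0 * σ (u 1) + u 1 * σ (u 0))) := by
    linear_combination -(σ (u 1)) * E0 + u 0 * sE1 - σ (u 0) * E1 + u 1 * sE0
  have hkey : ∀ s0 s1 : F,
      algebraMap F K (m*s0^2 + 2*n*s0*s1 + p*s1^2) * (u 0 * σ (u 1) - u 1 * σ (u 0))
      = 2 * lam * ((algebraMap F K s0 * σ (u 1) - algebraMap F K s1 * σ (u 0))
          * (algebraMap F K s0 * u 1 - algebraMap F K s1 * u 0)) := by
    intro s0 s1
    simp only [_root_.map_add, _root_.map_mul, _root_.map_pow, _root_.map_ofNat]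
    linear_combination (algebraMap F K s0)^2 * hq1 + (algebraMap F K s1)^2 * hq2
      + (algebraMap F K s0 * algebraMap F K s1) * hq3
  have hnorm : ∀ x y : F,
      (algebraMap F K x + algebraMap F K y * lam) * (algebraMap F K x - algebraMap F K y * lam)
      = algebraMap F K (x^2 - e*y^2) := by
    intro x y
    simp only [_root_.map_sub, _root_.map_mul, _root_.map_pow]
    linear_combination (-(algebraMap F K y)^2) * hlam
  have hσxy : ∀ x y : F,
      σ (algebraMap F K x + algebraMap F K y * lam)
      = algebraMap F K x - algebraMap F K y * lam := by
    intro x y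
    simp only [_root_.map_add, _root_.map_mul, AlgEquiv.commutes, hσ]; ring
  constructor
  · rintro ⟨S, hS1, hS2⟩
    have hdetS : S 0 0 * S 1 1 - S 1 0 * S 0 1 = 1 := by
      have h01 := congrFun (congrFun hS1 0) 1
      simp [Omega2, Matrix.mul_apply, Fin.sum_univ_two] at h01
      linear_combination h01
    have heab : e = -(a*b) := by
      have hdd := congrArg Matrix.det hS2
      rw [Matrix.det_mul, Matrix.det_mul, Matrix.det_transpose] at hdd
      have hD : S.det = 1 := by rw [Matrix.det_fin_two]; linear_combination hdetS
      have hMd : (!![m,n;n,p]).det = -e := by rw [Matrix.det_fin_two_of]; linear_combination hdet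
      rw [hD, hMd, Matrix.det_fin_two_of] at hdd
      linear_combination -hdd
    have hqa : m * (S 0 0)^2 + 2*n*(S 0 0)*(S 1 0) + p*(S 1 0)^2 = a := by
      have h00 := congrFun (congrFun hS2 0) 0
      simp [Matrix.mul_apply, Fin.sum_univ_two] at h00
      linear_combination h00
    obtain ⟨x, y, hβ⟩ := hK (algebraMap F K (S 0 0) * σ (u 1) - algebraMap F K (S 1 0) * σ (u 0))
    have hσβ : algebraMap F K (S 0 0) * u 1 - algebraMap F K (S 1 0) * u 0
        = algebraMap F K x - algebraMap F K y * lam := by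
      have h := congrArg σ hβ
      rw [hσxy] at h
      simp only [_root_.map_sub, _root_.map_mul, AlgEquiv.commutes, hσσ] at h
      exact h
    have hk := hkey (S 0 0) (S 1 0)
    rw [hβ, hσβ, hnorm x y] at hk
    rw [show m * S 0 0 ^ 2 + 2 * n * (S 0 0) * (S 1 0) + p * S 1 0 ^ 2 = a from hqa] at hk
    -- hk : φ a * w = 2 lam φN ; with w = φ c lam
    have h1 : (algebraMap F K a * algebraMap F K c - 2 * algebraMap F K (x^2 - e*y^2)) * lam = 0 := by
      rw [hw] at hk; linear_combination hk
    have hacK : algebraMap F K a * algebraMap F K c = 2 * algebraMap F K (x^2 - e*y^2) := by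
      have h2 := (mul_eq_zero.mp h1).resolve_right hlam0
      linear_combination h2
    refine ⟨heab, 2*x/c, 2*y/c, ?_⟩
    rw [hw]
    simp only [_root_.map_sub, _root_.map_pow, _root_.map_div₀, _root_.map_mul,
      _root_.map_ofNat] at hacK ⊢
    field_simp
    linear_combination hacK
  · rintro ⟨heab, x, y, hxy2⟩
    have ha0 : a ≠ 0 := fun h => he0 (by rw [heab, h, zero_mul, neg_zero])
    have hsym : ∀ v : K, σ ((algebraMap F K (y/2) + algebraMap F K (x/(2*e)) * lam) * v
        + σ (algebraMap F K (y/2) + algebraMap F K (x/(2*e)) * lam) * σ v)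
        = (algebraMap F K (y/2) + algebraMap F K (x/(2*e)) * lam) * v
          + σ (algebraMap F K (y/2) + algebraMap F K (x/(2*e)) * lam) * σ v := by
      intro v
      rw [_root_.map_add, _root_.map_mul, _root_.map_mul, hσσ, hσσ]
      ring
    obtain ⟨s0, hs0'⟩ := hfix _ (hsym (u 0))
    obtain ⟨s1, hs1'⟩ := hfix _ (hsym (u 1))
    have hs0 := hs0'.symm
    have hs1 := hs1'.symm
    set α : K := algebraMap F K (y/2) + algebraMap F K (x/(2*e)) * lam with hα
    have hσα : σ α = algebraMap F K (y/2) - algebraMap F K (x/(2*e)) * lam := hσxy _ _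
    have hnα : α * σ α = algebraMap F K ((y/2)^2 - e*(x/(2*e))^2) := by
      rw [hσα]; exact hnorm _ _
    have hk := hkey s0 s1
    rw [hs0, hs1] at hk
    have h5 : algebraMap F K (m*s0^2 + 2*n*s0*s1 + p*s1^2) * (u 0 * σ (u 1) - u 1 * σ (u 0))
        = (-(2 * lam * (α * σ α)) * (u 0 * σ (u 1) - u 1 * σ (u 0)))
          * (u 0 * σ (u 1) - u 1 * σ (u 0)) := by
      linear_combination hk
    have h6 := mul_right_cancel₀ hw0 h5
    -- h6 : φ q = -(2 lam (α σα)) * w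
    have hNF : ((y/2)^2 - e*(x/(2*e))^2) * (4*e) = -(x^2 - e*y^2) := by
      field_simp; ring
    have hηN : algebraMap F K ((y/2)^2 - e*(x/(2*e))^2) * ((4:K) * algebraMap F K e)
        = -(algebraMap F K (x^2 - e*y^2)) := by
      rw [← _root_.map_ofNat (algebraMap F K) 4, ← _root_.map_mul, ← _root_.map_mul, hNF, _root_.map_neg]
    have h7 := congrArg (· * ((4:K) * algebraMap F K e)) h6
    have h8 : algebraMap F K (m*s0^2 + 2*n*s0*s1 + p*s1^2) * ((4:K) * algebraMap F K e)
        = algebraMap F K a * ((4:K) * algebraMap F K e) := by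
      linear_combination h7
        - 2*lam*(u 0 * σ (u 1) - u 1 * σ (u 0)) * hηN
        - 2*lam*hxy2 + 4*(algebraMap F K a)*hlam
        - (2*lam*((4:K) * algebraMap F K e)*(u 0 * σ (u 1) - u 1 * σ (u 0))) * hnα
    have h4K : (4:K) * algebraMap F K e ≠ 0 := by
      apply mul_ne_zero _ heK
      have : (4:K) = 2*2 := by norm_num
      rw [this]; exact mul_ne_zero h2K h2K
    have hqa2 : m*s0^2 + 2*n*s0*s1 + p*s1^2 = a := hinj (mul_right_cancel₀ h4K h8)
    have htr : (!![s0, -(n*s0+p*s1)/a; s1, (m*s0+n*s1)/a])ᵀ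
        = !![s0, s1; -(n*s0+p*s1)/a, (m*s0+n*s1)/a] := by
      ext i j; fin_cases i <;> fin_cases j <;> simp
    refine ⟨!![s0, -(n*s0+p*s1)/a; s1, (m*s0+n*s1)/a], ?_, ?_⟩
    · rw [show Omega2 F = !![(0:F),1;-1,0] from rfl]
      rw [htr, Matrix.mul_fin_two, Matrix.mul_fin_two]
      ext i j
      fin_cases i <;> fin_cases j <;> simp <;> try field_simp
      all_goals first
        | ring1
        | linear_combination hqa2
        | linear_combination a*hqa2
        | linear_combination -(a*hqa2)
        | linear_combination -hqa2
        | linear_combination (m*s0^2+2*n*s0*s1+p*s1^2)*hdet + (-e)*hqa2 + (-a)*heab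
    · rw [htr, Matrix.mul_fin_two, Matrix.mul_fin_two]
      ext i j
      fin_cases i <;> fin_cases j <;> simp <;> try field_simp
      all_goals first
        | ring1
        | linear_combination hqa2
        | linear_combination a*hqa2
        | linear_combination -(a*hqa2)
        | linear_combination (m*s0^2+2*n*s0*s1+p*s1^2)*hdet + (-e)*hqa2 + (-a)*heab
end

section
/- Let F be a field of characteristic different from 2, let c ∈ F be a non-square, and let r, s ∈ F with r ≠ 0 and s ≠ 0. Let M be a symmetric 4×4 matrix over F such that the characteristic polynomial of Ω₀⁻¹ * M equals X⁴ − C(2*(s² + c*r²))*X² + C((s² − c*r²)²). Then there exists a symplectic matrix S over F such that Sᵀ * M * S = !![0, s, 0, r; s, 0, c*r, 0; 0, c*r, 0, s; r, 0, s, 0]. -/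
open Matrix Polynomial

/-- The standard symplectic 4×4 matrix. -/
def Omega4 (F : Type*) [Zero F] [One F] [Neg F] : Matrix (Fin 4) (Fin 4) F :=
  !![0, 1, 0, 0; -1, 0, 0, 0; 0, 0, 0, 1; 0, 0, -1, 0]

namespace FocusFocusAux

variable {F : Type*} [Field F]

lemma omega_transpose : (Omega4 F)ᵀ = -(Omega4 F) := by
  ext i j; fin_cases i <;> fin_cases j <;>
    simp [Omega4, Matrix.vecHead, Matrix.vecTail]

lemma omega_mul_self : (Omega4 F) * (Omega4 F) = -1 := by
  ext i j; fin_cases i <;> fin_cases j <;>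
    simp [Omega4, Matrix.mul_apply, Fin.sum_univ_four, Matrix.vecHead, Matrix.vecTail]

lemma omega_inv : (Omega4 F)⁻¹ = -(Omega4 F) := by
  apply Matrix.inv_eq_right_inv
  ext i j; fin_cases i <;> fin_cases j <;>
    simp [Omega4, Matrix.mul_apply, Fin.sum_univ_four, Matrix.vecHead, Matrix.vecTail]

lemma eval_charpoly4 (A : Matrix (Fin 4) (Fin 4) F) (x : F) :
    (charpoly A).eval x = det (x • (1 : Matrix (Fin 4) (Fin 4) F) - A) := by
  rw [Matrix.charpoly, ← Polynomial.coe_evalRingHom, RingHom.map_det]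
  congr 1
  ext i j
  by_cases h : i = j <;>
    simp [h, Matrix.charmatrix_apply, Matrix.map_apply, Matrix.one_apply, Matrix.smul_apply]

lemma dp_mulVec (A B : Matrix (Fin 4) (Fin 4) F) (x y : Fin 4 → F) :
    (A *ᵥ x) ⬝ᵥ (B *ᵥ y) = x ⬝ᵥ ((Aᵀ * B) *ᵥ y) := by
  rw [Matrix.dotProduct_mulVec, Matrix.dotProduct_mulVec, ← Matrix.vecMul_transpose,
    Matrix.vecMul_vecMul]

/-- The symplectic pairing. -/
def om (x y : Fin 4 → F) : F := x ⬝ᵥ ((Omega4 F) *ᵥ y)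

lemma om_add_right (x y z : Fin 4 → F) : om x (y + z) = om x y + om x z := by
  simp [om, Matrix.mulVec_add, dotProduct_add]

lemma om_sub_right (x y z : Fin 4 → F) : om x (y - z) = om x y - om x z := by
  simp [om, Matrix.mulVec_sub, dotProduct_sub]

lemma om_smul_right (a : F) (x y : Fin 4 → F) : om x (a • y) = a * om x y := by
  simp [om, Matrix.mulVec_smul, dotProduct_smul, smul_eq_mul]

lemma om_add_left (x y z : Fin 4 → F) : om (x + y) z = om x z + om y z := by
  simp [om, add_dotProduct]

lemma om_smul_left (a : F) (x y : Fin 4 → F) : om (a • x) y = a * om x y := by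
  simp [om, smul_dotProduct, smul_eq_mul]

lemma om_sub_left (x y z : Fin 4 → F) : om (x - y) z = om x z - om y z := by
  simp [om, sub_dotProduct]

lemma om_neg_right (x y : Fin 4 → F) : om x (-y) = - om x y := by
  simp [om, Matrix.mulVec_neg, dotProduct_neg]

lemma om_neg_left (x y : Fin 4 → F) : om (-x) y = - om x y := by
  simp [om, neg_dotProduct]

lemma om_skew (x y : Fin 4 → F) : om x y = - om y x := by
  have h1 : om x y = ((Omega4 F)ᵀ *ᵥ x) ⬝ᵥ y := by
    rw [om, Matrix.dotProduct_mulVec, ← Matrix.mulVec_transpose]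
  rw [h1, omega_transpose, Matrix.neg_mulVec, neg_dotProduct,
    dotProduct_comm, om]

lemma om_ham {A : Matrix (Fin 4) (Fin 4) F}
    (hHam : Aᵀ * Omega4 F = -(Omega4 F * A)) (x y : Fin 4 → F) :
    om (A *ᵥ x) y = - om x (A *ᵥ y) := by
  rw [om, dp_mulVec, hHam, Matrix.neg_mulVec, dotProduct_neg, om,
    ← Matrix.mulVec_mulVec]

lemma om_nondeg {v : Fin 4 → F} (h : ∀ x, om v x = 0) : v = 0 := by
  funext k
  have := h ((-(Omega4 F)) *ᵥ Pi.single k 1)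
  rw [om, Matrix.mulVec_mulVec, Matrix.mul_neg, omega_mul_self, neg_neg,
    Matrix.one_mulVec, dotProduct_single] at this
  simpa using this

lemma iso {A : Matrix (Fin 4) (Fin 4) F}
    (hHam : Aᵀ * Omega4 F = -(Omega4 F * A))
    {t d : F} (h2 : (2 : F) ≠ 0) (ht : t ≠ 0) (hd : d ≠ 0)
    {x y : Fin 4 → F}
    (hx : A *ᵥ (A *ᵥ x) = (2*t) • (A *ᵥ x) - d • x)
    (hy : A *ᵥ (A *ᵥ y) = (2*t) • (A *ᵥ y) - d • y) :
    om x y = 0 ∧ om x (A *ᵥ y) = 0 := by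
  have h4t : (2*t) * 2 ≠ 0 := mul_ne_zero (mul_ne_zero h2 ht) h2
  have step : ∀ u w : Fin 4 → F,
      (A *ᵥ (A *ᵥ u) = (2*t) • (A *ᵥ u) - d • u) →
      (A *ᵥ (A *ᵥ w) = (2*t) • (A *ᵥ w) - d • w) →
      om u (A *ᵥ w) = 0 := by
    intro u w hu hw
    have e1 : om (A *ᵥ u) (A *ᵥ w) = -((2*t) * om u (A *ᵥ w)) + d * om u w := by
      rw [om_ham hHam, hw, om_sub_right, om_smul_right, om_smul_right]; ring
    have e2 : om (A *ᵥ u) (A *ᵥ w) = (2*t) * om u (A *ᵥ w) + d * om u w := by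
      have h3 := om_ham hHam (A *ᵥ u) w
      rw [hu] at h3
      have h7 : om (A *ᵥ u) w = - om u (A *ᵥ w) := om_ham hHam u w
      rw [om_sub_left, om_smul_left, om_smul_left, h7] at h3
      linear_combination h3
    have : ((2*t) * 2) * om u (A *ᵥ w) = 0 := by linear_combination e1 - e2
    exact (mul_eq_zero.mp this).resolve_left h4t
  have h1 : om x (A *ᵥ y) = 0 := step x y hx hy
  have hy' : A *ᵥ (A *ᵥ (A *ᵥ y)) = (2*t) • (A *ᵥ (A *ᵥ y)) - d • (A *ᵥ y) := by
    have h5 := congrArg (fun z => A *ᵥ z) hy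
    simpa [Matrix.mulVec_add, Matrix.mulVec_smul, Matrix.mulVec_sub] using h5
  have h6 : om x (A *ᵥ (A *ᵥ y)) = 0 := step x (A *ᵥ y) hx hy'
  rw [hy, om_sub_right, om_smul_right, om_smul_right, h1] at h6
  constructor
  · have : d * om x y = 0 := by linear_combination -h6
    exact (mul_eq_zero.mp this).resolve_left hd
  · exact h1

lemma no_quad {A : Matrix (Fin 4) (Fin 4) F} {t d : F}
    (h2 : (2 : F) ≠ 0) (ht : t ≠ 0) (hd : d ≠ 0)
    (hchp : A.charpoly = X ^ 4 - C (4*t^2 - 2*d) * X ^ 2 + C (d ^ 2))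
    (h : A ^ 2 = (2*t) • A - d • 1) : False := by
  have hdet : ∀ x : F, det (x • (1 : Matrix (Fin 4) (Fin 4) F) - A)
      = x ^ 4 - (4*t^2 - 2*d) * x ^ 2 + d ^ 2 := by
    intro x
    rw [← eval_charpoly4, hchp]
    simp [eval_add, eval_sub, eval_mul, eval_pow]
  have hdetA : A.det = d ^ 2 := by
    have h0 := hdet 0
    rw [zero_smul, zero_sub, Matrix.det_neg, Fintype.card_fin] at h0
    norm_num at h0
    exact h0
  have h2t : (2*t) ≠ 0 := mul_ne_zero h2 ht
  have e1 : ((2*t) • A - d • (1 : Matrix (Fin 4) (Fin 4) F))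
      = (-(2*t)) • ((d/(2*t)) • (1 : Matrix (Fin 4) (Fin 4) F) - A) := by
    rw [smul_sub, smul_smul, show -(2*t) * (d/(2*t)) = -d by field_simp]
    module
  have e2 : det (A ^ 2) = det ((2*t) • A - d • (1 : Matrix (Fin 4) (Fin 4) F)) := by rw [h]
  rw [det_pow, hdetA, e1, Matrix.det_smul, hdet, Fintype.card_fin] at e2
  have e3 : (512 : F) * t^8 * d^3 = 0 := by
    field_simp at e2
    linear_combination (-64*t^6*d^2) * e2
  have h512 : (512 : F) ≠ 0 := by
    have : ((2:F))^9 ≠ 0 := pow_ne_zero _ h2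
    simpa [show ((2:F))^9 = 512 by norm_num] using this
  exact (mul_ne_zero (mul_ne_zero h512 (pow_ne_zero _ ht)) (pow_ne_zero _ hd)) e3

set_option maxHeartbeats 2000000 in
lemma key (hchar : ringChar F ≠ 2) (c r s : F) (hc : ¬ IsSquare c) (hr : r ≠ 0) (hs : s ≠ 0)
    (M : Matrix (Fin 4) (Fin 4) F) (hM : Mᵀ = M)
    (hchp : ((Omega4 F)⁻¹ * M).charpoly =
      X ^ 4 - C (2 * (s ^ 2 + c * r ^ 2)) * X ^ 2 + C ((s ^ 2 - c * r ^ 2) ^ 2)) :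
    ∃ S : Matrix (Fin 4) (Fin 4) F,
      Sᵀ * Omega4 F * S = Omega4 F ∧
      Sᵀ * M * S = !![0, 0, 0, -1; 0, 0, s^2 - c*r^2, 0;
                      0, s^2 - c*r^2, 0, -(2*s); -1, 0, -(2*s), 0] := by
  have h2 : (2 : F) ≠ 0 := by
    intro h
    exact hchar (CharP.ringChar_of_prime_eq_zero Nat.prime_two (by exact_mod_cast h))
  have hd : s^2 - c*r^2 ≠ 0 := by
    intro h
    refine hc ⟨s/r, ?_⟩
    field_simp
    linear_combination -h
  set d : F := s^2 - c*r^2 with hd_def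
  set A : Matrix (Fin 4) (Fin 4) F := (Omega4 F)⁻¹ * M with hA_def
  have hAeq : A = -(Omega4 F * M) := by rw [hA_def, omega_inv, Matrix.neg_mul]
  have hOA : Omega4 F * A = M := by
    rw [hAeq, Matrix.mul_neg, ← Matrix.mul_assoc, omega_mul_self]
    simp
  have hHam : Aᵀ * Omega4 F = -(Omega4 F * A) := by
    rw [hOA, hAeq, Matrix.transpose_neg, Matrix.transpose_mul, hM, omega_transpose,
      Matrix.mul_neg, neg_neg, Matrix.mul_assoc, omega_mul_self, Matrix.mul_neg, mul_one]
  -- Cayley-Hamilton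
  have hco : (2*(s^2 + c*r^2)) = 4*s^2 - 2*d := by rw [hd_def]; ring
  have hCH : A^4 - (4*s^2 - 2*d) • A^2 + (d^2) • (1 : Matrix (Fin 4) (Fin 4) F) = 0 := by
    have hch := Matrix.aeval_self_charpoly A
    rw [hchp] at hch
    have haev : (aeval A) (X ^ 4 - C (2 * (s ^ 2 + c * r ^ 2)) * X ^ 2 + C (d ^ 2))
        = A^4 - (2*(s^2 + c*r^2)) • A^2 + (d^2) • (1 : Matrix (Fin 4) (Fin 4) F) := by
      rw [map_add, map_sub, map_pow, aeval_X, _root_.map_mul, aeval_C, map_pow, aeval_X, aeval_C,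
        Algebra.algebraMap_eq_smul_one, Algebra.algebraMap_eq_smul_one, smul_mul_assoc, one_mul]
    rw [haev] at hch
    rw [← hco]
    exact hch
  have e1 : A^2*A^2 = A^4 := (pow_add A 2 2).symm
  have e2 : A^2*A = A^3 := (pow_succ A 2).symm
  have e3 : A*A^2 = A^3 := (pow_succ' A 2).symm
  have e4 : A*A = A^2 := (sq A).symm
  obtain ⟨Q, hQ_def⟩ : ∃ Q : Matrix (Fin 4) (Fin 4) F, Q = A^2 - (2*s) • A + d • 1 := ⟨_, rfl⟩
  obtain ⟨Q', hQ'_def⟩ : ∃ Q' : Matrix (Fin 4) (Fin 4) F, Q' = A^2 + (2*s) • A + d • 1 := ⟨_, rfl⟩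
  have hQQ' : Q * Q' = 0 := by
    have expand : Q * Q' = A^4 - (4*s^2 - 2*d) • A^2 + (d^2) • (1 : Matrix (Fin 4) (Fin 4) F) := by
      rw [hQ_def, hQ'_def]
      simp only [mul_add, add_mul, sub_mul, mul_sub, smul_mul_assoc, mul_smul_comm, smul_smul,
        mul_one, one_mul, e1, e2, e3, e4, sub_smul, add_smul]
      module
    rw [expand, hCH]
  have hQ'Q : Q' * Q = 0 := by
    have expand : Q' * Q = A^4 - (4*s^2 - 2*d) • A^2 + (d^2) • (1 : Matrix (Fin 4) (Fin 4) F) := by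
      rw [hQ_def, hQ'_def]
      simp only [mul_add, add_mul, sub_mul, mul_sub, smul_mul_assoc, mul_smul_comm, smul_smul,
        mul_one, one_mul, e1, e2, e3, e4, sub_smul, add_smul]
      module
    rw [expand, hCH]
  have hQA : Q * A = A * Q := by
    rw [hQ_def]
    simp only [mul_add, add_mul, sub_mul, mul_sub, smul_mul_assoc, mul_smul_comm,
      mul_one, one_mul, e2, e3]
  have hQ'A : Q' * A = A * Q' := by
    rw [hQ'_def]
    simp only [mul_add, add_mul, sub_mul, mul_sub, smul_mul_assoc, mul_smul_comm,
      mul_one, one_mul, e2, e3]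
  have hI1 : (A - (2*s) • 1) * Q' = (A + (2*s) • 1) * Q - (4*s*d) • 1 := by
    rw [hQ_def, hQ'_def]
    simp only [mul_add, add_mul, sub_mul, mul_sub, smul_mul_assoc, mul_smul_comm, smul_smul,
      mul_one, one_mul, e2, e3, e4]
    module
  have h4 : (4 : F) ≠ 0 := by
    intro h
    exact h2 (by have : (2:F)*2 = 0 := by rw [show (2:F)*2 = 4 by norm_num, h]
                 rcases mul_eq_zero.mp this with h'|h' <;> exact h')
  have h4sd : (4*s*d) ≠ 0 := mul_ne_zero (mul_ne_zero h4 hs) hd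
  obtain ⟨P, hP_def⟩ : ∃ P : Matrix (Fin 4) (Fin 4) F,
      P = (-(4*s*d)⁻¹) • ((A - (2*s) • 1) * Q') := ⟨_, rfl⟩
  have hcomQ : Q * (A - (2*s) • 1) = (A - (2*s) • 1) * Q := by
    rw [mul_sub, sub_mul, hQA, Matrix.mul_smul, Matrix.smul_mul, mul_one, one_mul]
  have hcomQ' : Q' * (A + (2*s) • 1) = (A + (2*s) • 1) * Q' := by
    rw [mul_add, add_mul, hQ'A, Matrix.mul_smul, Matrix.smul_mul, mul_one, one_mul]
  have hQP : Q * P = 0 := by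
    rw [hP_def, Matrix.mul_smul, ← Matrix.mul_assoc, hcomQ, Matrix.mul_assoc, hQQ',
      Matrix.mul_zero, smul_zero]
  have hI2 : (1 : Matrix (Fin 4) (Fin 4) F) - P = ((4*s*d)⁻¹) • ((A + (2*s) • 1) * Q) := by
    rw [hP_def, hI1, smul_sub, smul_smul,
      show -(4*s*d)⁻¹ * (4*s*d) = -1 by field_simp]
    module
  have hQ'1P : Q' * ((1 : Matrix (Fin 4) (Fin 4) F) - P) = 0 := by
    rw [hI2, Matrix.mul_smul, ← Matrix.mul_assoc, hcomQ', Matrix.mul_assoc, hQ'Q,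
      Matrix.mul_zero, smul_zero]
  -- Q and Q' are nonzero
  have hchp' : ∀ t : F, t^2 = s^2 → A.charpoly = X ^ 4 - C (4*t^2 - 2*d) * X ^ 2 + C (d ^ 2) := by
    intro t ht
    rw [hchp]
    have hcoe : 2 * (s ^ 2 + c * r ^ 2) = 4*t^2 - 2*d := by rw [hd_def, ht]; ring
    rw [hcoe]
  have hQ'ne : Q' ≠ 0 := by
    intro h
    have h' : A^2 + (2*s) • A + d • (1 : Matrix (Fin 4) (Fin 4) F) = 0 := by rw [← hQ'_def]; exact h
    have hsq : A^2 = (2*(-s)) • A - d • (1 : Matrix (Fin 4) (Fin 4) F) := by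
      calc A^2 = (A^2 + (2*s) • A + d • 1) - ((2*s) • A) - (d • (1 : Matrix (Fin 4) (Fin 4) F)) := by
            module
        _ = 0 - ((2*s) • A) - (d • (1 : Matrix (Fin 4) (Fin 4) F)) := by rw [h']
        _ = (2*(-s)) • A - d • (1 : Matrix (Fin 4) (Fin 4) F) := by module
    exact no_quad h2 (neg_ne_zero.mpr hs) hd (hchp' (-s) (by ring)) hsq
  have hQne : Q ≠ 0 := by
    intro h
    have h' : A^2 - (2*s) • A + d • (1 : Matrix (Fin 4) (Fin 4) F) = 0 := by rw [← hQ_def]; exact h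
    have hsq : A^2 = (2*s) • A - d • (1 : Matrix (Fin 4) (Fin 4) F) := by
      calc A^2 = (A^2 - (2*s) • A + d • 1) + ((2*s) • A) - (d • (1 : Matrix (Fin 4) (Fin 4) F)) := by
            module
        _ = 0 + ((2*s) • A) - (d • (1 : Matrix (Fin 4) (Fin 4) F)) := by rw [h']
        _ = (2*s) • A - d • (1 : Matrix (Fin 4) (Fin 4) F) := by module
    exact no_quad h2 hs hd (hchp' s rfl) hsq
  have hPne : P ≠ 0 := by
    intro h
    apply hQ'ne
    have h5 : (A - (2*s) • 1) * Q' = 0 := by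
      have := h
      rw [hP_def, smul_eq_zero] at this
      rcases this with h'|h'
      · exact absurd (neg_eq_zero.mp h') (inv_ne_zero h4sd)
      · exact h'
    have h6 : (A + (2*s) • 1) * Q = (4*s*d) • 1 := by
      have h6' : (A + (2*s) • 1) * Q - (4*s*d) • 1 = 0 := by rw [← hI1, h5]
      exact sub_eq_zero.mp h6'
    have h7 : ((A + (2*s) • 1) * Q) * Q' = (4*s*d) • Q' := by
      rw [h6, Matrix.smul_mul, one_mul]
    rw [Matrix.mul_assoc, hQQ', Matrix.mul_zero] at h7
    have := h7.symm
    rw [smul_eq_zero] at this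
    exact this.resolve_left h4sd
  have h1Pne : (1 : Matrix (Fin 4) (Fin 4) F) - P ≠ 0 := by
    intro h
    apply hQne
    have h5 : (A + (2*s) • 1) * Q = 0 := by
      have := h
      rw [hI2, smul_eq_zero] at this
      rcases this with h'|h'
      · exact absurd h' (inv_ne_zero h4sd)
      · exact h'
    have h6 : (A - (2*s) • 1) * Q' = -((4*s*d) • 1) := by
      rw [hI1, h5]; module
    have h7 : ((A - (2*s) • 1) * Q') * Q = -((4*s*d) • Q) := by
      rw [h6]; rw [Matrix.neg_mul, Matrix.smul_mul, one_mul]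
    rw [Matrix.mul_assoc, hQ'Q, Matrix.mul_zero] at h7
    have h8 : (4*s*d) • Q = 0 := by
      have := h7.symm
      rwa [neg_eq_zero] at this
    rw [smul_eq_zero] at h8
    exact h8.resolve_left h4sd
  -- extract v in ker Q
  have hexP : ∃ i j, P i j ≠ 0 := by
    by_contra hcon
    push_neg at hcon
    exact hPne (by ext i j; simpa using hcon i j)
  obtain ⟨iv, jv, hPij⟩ := hexP
  obtain ⟨v, hv_def⟩ : ∃ v : Fin 4 → F, v = fun k => P k jv := ⟨_, rfl⟩
  have hv0 : v ≠ 0 := by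
    intro h
    apply hPij
    have hiv := congrFun h iv
    rw [hv_def] at hiv
    simpa using hiv
  have hQv : Q *ᵥ v = 0 := by
    funext k
    have hk : (Q * P) k jv = 0 := by rw [hQP]; rfl
    rw [Matrix.mul_apply] at hk
    simpa [hv_def, Matrix.mulVec, dotProduct] using hk
  -- recurrence helpers
  have hrecQ : ∀ x, Q *ᵥ x = 0 → A *ᵥ (A *ᵥ x) = (2*s) • (A *ᵥ x) - d • x := by
    intro x hx
    rw [hQ_def] at hx
    rw [Matrix.add_mulVec, Matrix.sub_mulVec, Matrix.smul_mulVec,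
      Matrix.smul_mulVec, Matrix.one_mulVec, sq, ← Matrix.mulVec_mulVec] at hx
    have := sub_eq_zero.mp (by rw [← hx]; module :
      (A *ᵥ (A *ᵥ x)) - ((2*s) • (A *ᵥ x) - d • x) = 0)
    exact this
  have hrecQ' : ∀ x, Q' *ᵥ x = 0 → A *ᵥ (A *ᵥ x) = (2*(-s)) • (A *ᵥ x) - d • x := by
    intro x hx
    rw [hQ'_def] at hx
    rw [Matrix.add_mulVec, Matrix.add_mulVec, Matrix.smul_mulVec,
      Matrix.smul_mulVec, Matrix.one_mulVec, sq, ← Matrix.mulVec_mulVec] at hx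
    have := sub_eq_zero.mp (by rw [← hx]; module :
      (A *ᵥ (A *ᵥ x)) - ((2*(-s)) • (A *ᵥ x) - d • x) = 0)
    exact this
  have isoQ : ∀ x y, Q *ᵥ x = 0 → Q *ᵥ y = 0 → om x y = 0 ∧ om x (A *ᵥ y) = 0 :=
    fun x y hx hy => iso hHam h2 hs hd (hrecQ x hx) (hrecQ y hy)
  have isoQ' : ∀ x y, Q' *ᵥ x = 0 → Q' *ᵥ y = 0 → om x y = 0 ∧ om x (A *ᵥ y) = 0 :=
    fun x y hx hy => iso hHam h2 (neg_ne_zero.mpr hs) hd (hrecQ' x hx) (hrecQ' y hy)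
  -- extract w in ker Q' pairing with v
  have hPkerQ : ∀ x, Q *ᵥ (P *ᵥ x) = 0 := fun x => by
    rw [Matrix.mulVec_mulVec, hQP, Matrix.zero_mulVec]
  have h1PkerQ' : ∀ x, Q' *ᵥ (((1 : Matrix (Fin 4) (Fin 4) F) - P) *ᵥ x) = 0 := fun x => by
    rw [Matrix.mulVec_mulVec, hQ'1P, Matrix.zero_mulVec]
  have hex : ∃ x0, om v (((1 : Matrix (Fin 4) (Fin 4) F) - P) *ᵥ x0) ≠ 0 := by
    by_contra hcon
    push_neg at hcon
    apply hv0
    apply om_nondeg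
    intro x
    have hPP : P + ((1 : Matrix (Fin 4) (Fin 4) F) - P) = 1 := by abel
    have hsplit : x = P *ᵥ x + ((1 : Matrix (Fin 4) (Fin 4) F) - P) *ᵥ x := by
      rw [← Matrix.add_mulVec, hPP, Matrix.one_mulVec]
    rw [hsplit, om_add_right, (isoQ v _ hQv (hPkerQ x)).1, hcon x, add_zero]
  obtain ⟨x0, hx0⟩ := hex
  obtain ⟨w, hw_def⟩ : ∃ w : Fin 4 → F,
      w = (om v (((1 : Matrix (Fin 4) (Fin 4) F) - P) *ᵥ x0))⁻¹ •
          (((1 : Matrix (Fin 4) (Fin 4) F) - P) *ᵥ x0) := ⟨_, rfl⟩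
  have hQ'w : Q' *ᵥ w = 0 := by
    rw [hw_def, Matrix.mulVec_smul, h1PkerQ', smul_zero]
  have hvw : om v w = 1 := by
    rw [hw_def, om_smul_right, inv_mul_cancel₀ hx0]
  obtain ⟨a, ha_def⟩ : ∃ a : F, a = om v (A *ᵥ w) := ⟨_, rfl⟩
  obtain ⟨D, hD_def⟩ : ∃ D : F, D = a^2 + 2*s*a + d := ⟨_, rfl⟩
  have hD : D ≠ 0 := by
    intro h
    refine hc ⟨(a+s)/r, ?_⟩
    rw [hD_def, hd_def] at h
    field_simp
    linear_combination -h
  -- kernel membership of images under A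
  have hQAv : Q *ᵥ (A *ᵥ v) = 0 := by
    rw [Matrix.mulVec_mulVec, hQA, ← Matrix.mulVec_mulVec, hQv, Matrix.mulVec_zero]
  have hQ'Aw : Q' *ᵥ (A *ᵥ w) = 0 := by
    rw [Matrix.mulVec_mulVec, hQ'A, ← Matrix.mulVec_mulVec, hQ'w, Matrix.mulVec_zero]
  have hvAv := hrecQ v hQv
  have hwAw := hrecQ' w hQ'w
  -- pairing table
  have T_vv : om v v = 0 := (isoQ v v hQv hQv).1
  have T_vAv : om v (A *ᵥ v) = 0 := (isoQ v v hQv hQv).2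
  have T_Avv : om (A *ᵥ v) v = 0 := (isoQ _ _ hQAv hQv).1
  have T_AvAv : om (A *ᵥ v) (A *ᵥ v) = 0 := (isoQ _ _ hQAv hQv).2
  have T_ww : om w w = 0 := (isoQ' w w hQ'w hQ'w).1
  have T_wAw : om w (A *ᵥ w) = 0 := (isoQ' w w hQ'w hQ'w).2
  have T_Aww : om (A *ᵥ w) w = 0 := (isoQ' _ _ hQ'Aw hQ'w).1
  have T_AwAw : om (A *ᵥ w) (A *ᵥ w) = 0 := (isoQ' _ _ hQ'Aw hQ'w).2
  have T_vw : om v w = 1 := hvw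
  have T_vAw : om v (A *ᵥ w) = a := ha_def.symm
  have T_Avw : om (A *ᵥ v) w = -a := by rw [om_ham hHam, ← ha_def]
  have T_AvAw : om (A *ᵥ v) (A *ᵥ w) = 2*s*a + d := by
    rw [om_ham hHam, hwAw, om_sub_right, om_smul_right, om_smul_right, ← ha_def, hvw]
    ring
  have T_wv : om w v = -1 := by rw [om_skew, hvw]
  have T_wAv : om w (A *ᵥ v) = a := by rw [om_skew, T_Avw]; ring
  have T_Awv : om (A *ᵥ w) v = -a := by rw [om_skew, T_vAw]
  have T_AwAv : om (A *ᵥ w) (A *ᵥ v) = -(2*s*a + d) := by rw [om_skew, T_AvAw]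
  -- the symplectic basis
  obtain ⟨u2, hu2⟩ : ∃ u2 : Fin 4 → F,
      u2 = ((d + 2*s*a)/D) • w + (a/D) • (A *ᵥ w) := ⟨_, rfl⟩
  obtain ⟨u4, hu4⟩ : ∃ u4 : Fin 4 → F,
      u4 = (-(a/D)) • w + (D⁻¹) • (A *ᵥ w) := ⟨_, rfl⟩
  obtain ⟨cols, hcols⟩ : ∃ cols : Fin 4 → Fin 4 → F,
      cols = ![v, u2, A *ᵥ v, u4] := ⟨_, rfl⟩
  obtain ⟨S, hS_def⟩ : ∃ S : Matrix (Fin 4) (Fin 4) F,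
      S = Matrix.of (fun i j => cols j i) := ⟨_, rfl⟩
  have hentry : ∀ (N : Matrix (Fin 4) (Fin 4) F) i j,
      (Sᵀ * N * S) i j = cols i ⬝ᵥ (N *ᵥ cols j) := by
    intro N i j
    rw [hS_def]
    simp only [Matrix.mul_apply, Matrix.transpose_apply, Matrix.of_apply, Matrix.mulVec,
      dotProduct, Finset.sum_mul, Finset.mul_sum]
    rw [Finset.sum_comm]
    exact Finset.sum_congr rfl fun k _ => Finset.sum_congr rfl fun l _ => by ring
  have homdef : ∀ x y : Fin 4 → F, x ⬝ᵥ ((Omega4 F) *ᵥ y) = om x y := fun _ _ => rfl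
  have hvAv2 : (A*A) *ᵥ v = (2*s) • (A *ᵥ v) - d • v := by
    rw [← Matrix.mulVec_mulVec]; exact hvAv
  have hwAw2 : (A*A) *ᵥ w = (2*(-s)) • (A *ᵥ w) - d • w := by
    rw [← Matrix.mulVec_mulVec]; exact hwAw
  have hDD : a^2 + 2*s*a + d ≠ 0 := by
    rw [hD_def] at hD; exact hD
  refine ⟨S, ?_, ?_⟩
  · ext i j
    rw [hentry, homdef]
    fin_cases i <;> fin_cases j <;>
    · simp [hcols, hu2, hu4, Matrix.mulVec_add, Matrix.mulVec_smul, Matrix.mulVec_neg, hvAv2, hwAw2,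
        om_add_right, om_add_left, om_smul_right, om_smul_left, om_neg_right, om_neg_left,
        om_sub_right, om_sub_left,
        T_vv, T_vAv, T_Avv, T_AvAv, T_ww, T_wAw, T_Aww, T_AwAw, T_vw, T_vAw,
        T_Avw, T_AvAw, T_wv, T_wAv, T_Awv, T_AwAv, Omega4,
        Matrix.vecHead, Matrix.vecTail]
      try field_simp
      try ring
      try (rw [hD_def]; ring)
  · ext i j
    rw [hentry, ← hOA, ← Matrix.mulVec_mulVec, homdef]
    fin_cases i <;> fin_cases j <;>
    · simp [hcols, hu2, hu4, Matrix.mulVec_add, Matrix.mulVec_smul, Matrix.mulVec_neg, hvAv2, hwAw2,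
        om_add_right, om_add_left, om_smul_right, om_smul_left, om_neg_right, om_neg_left,
        om_sub_right, om_sub_left,
        T_vv, T_vAv, T_Avv, T_AvAv, T_ww, T_wAw, T_Aww, T_AwAw, T_vw, T_vAw,
        T_Avw, T_AvAw, T_wv, T_wAv, T_Awv, T_AwAv, Omega4,
        Matrix.vecHead, Matrix.vecTail]
      try field_simp
      try ring
      try (rw [hD_def]; ring)

set_option maxHeartbeats 1000000 in
lemma target_charpoly (c r s : F) :
    ((Omega4 F)⁻¹ *
        (!![0, s, 0, r; s, 0, c * r, 0; 0, c * r, 0, s; r, 0, s, 0] :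
          Matrix (Fin 4) (Fin 4) F)).charpoly
      = X ^ 4 - C (2 * (s ^ 2 + c * r ^ 2)) * X ^ 2 + C ((s ^ 2 - c * r ^ 2) ^ 2) := by
  have hB : (Omega4 F)⁻¹ *
        (!![0, s, 0, r; s, 0, c * r, 0; 0, c * r, 0, s; r, 0, s, 0] :
          Matrix (Fin 4) (Fin 4) F)
      = !![-s, 0, -(c*r), 0; 0, s, 0, r; -r, 0, -s, 0; 0, c*r, 0, s] := by
    rw [omega_inv]
    ext i j
    fin_cases i <;> fin_cases j <;>
      simp [Omega4, Matrix.mul_apply, Fin.sum_univ_four, Matrix.vecHead, Matrix.vecTail]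
  rw [hB, Matrix.charpoly]
  rw [show (charmatrix !![-s, 0, -(c*r), 0; 0, s, 0, r; -r, 0, -s, 0; 0, c*r, 0, s] :
      Matrix (Fin 4) (Fin 4) F[X]) =
    !![X + C s, 0, C (c*r), 0; 0, X - C s, 0, -C r;
       C r, 0, X + C s, 0; 0, -C (c*r), 0, X - C s] by
    ext i j
    fin_cases i <;> fin_cases j <;>
      simp [charmatrix_apply, Matrix.one_apply, Matrix.vecHead, Matrix.vecTail]]
  rw [Matrix.det_succ_row_zero]
  simp [Fin.sum_univ_succ, Matrix.det_fin_three, Matrix.vecHead, Matrix.vecTail,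
    Matrix.submatrix, Fin.succAbove]
  rw [show (C 2 : F[X]) = 2 from map_ofNat C 2]
  ring

lemma target_symm (c r s : F) :
    (!![0, s, 0, r; s, 0, c * r, 0; 0, c * r, 0, s; r, 0, s, 0] :
      Matrix (Fin 4) (Fin 4) F)ᵀ
      = !![0, s, 0, r; s, 0, c * r, 0; 0, c * r, 0, s; r, 0, s, 0] := by
  ext i j
  fin_cases i <;> fin_cases j <;> simp [Matrix.vecHead, Matrix.vecTail]

lemma det_omega_ne : (Omega4 F).det ≠ 0 := by
  intro h
  have h1 : (Omega4 F).det * (Omega4 F).det = 1 := by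
    rw [← Matrix.det_mul, omega_mul_self]
    rw [show (-1 : Matrix (Fin 4) (Fin 4) F) = -(1 : Matrix (Fin 4) (Fin 4) F) from rfl,
      Matrix.det_neg, Fintype.card_fin]
    norm_num
  rw [h, mul_zero] at h1
  exact zero_ne_one h1

end FocusFocusAux

open FocusFocusAux in
/-- Focus-focus normal form: if the eigenvalues of `Ω₀⁻¹ * M` are `±s ± r√c` with `c`
a non-square (encoded by the stated characteristic polynomial), then `M` is
symplectically equivalent to the focus-focus block. -/
theorem focus_focus_normal_form
    (F : Type*) [Field F] (hchar : ringChar F ≠ 2)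
    (c r s : F) (hc : ¬ IsSquare c) (hr : r ≠ 0) (hs : s ≠ 0)
    (M : Matrix (Fin 4) (Fin 4) F) (hM : Mᵀ = M)
    (hchp : ((Omega4 F)⁻¹ * M).charpoly =
      X ^ 4 - C (2 * (s ^ 2 + c * r ^ 2)) * X ^ 2 + C ((s ^ 2 - c * r ^ 2) ^ 2)) :
    ∃ S : Matrix (Fin 4) (Fin 4) F,
      Sᵀ * Omega4 F * S = Omega4 F ∧
      Sᵀ * M * S = !![0, s, 0, r; s, 0, c * r, 0; 0, c * r, 0, s; r, 0, s, 0] := by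
  obtain ⟨S₁, hS₁O, hS₁M⟩ := key hchar c r s hc hr hs M hM hchp
  obtain ⟨S₂, hS₂O, hS₂N⟩ := key hchar c r s hc hr hs
    (!![0, s, 0, r; s, 0, c * r, 0; 0, c * r, 0, s; r, 0, s, 0]) (target_symm c r s)
    (target_charpoly c r s)
  -- S₂ is invertible
  have hdet : S₂.det * S₂.det * (Omega4 F).det = (Omega4 F).det := by
    have h0 := congrArg Matrix.det hS₂O
    rw [Matrix.det_mul, Matrix.det_mul, Matrix.det_transpose] at h0
    linear_combination h0
  have hdetS₂ : S₂.det ≠ 0 := by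
    intro h
    rw [h, mul_zero, zero_mul] at hdet
    exact det_omega_ne hdet.symm
  have hunit : IsUnit S₂.det := isUnit_iff_ne_zero.mpr hdetS₂
  have hST : S₂ * S₂⁻¹ = 1 := Matrix.mul_nonsing_inv S₂ hunit
  have hTS : S₂⁻¹ * S₂ = 1 := Matrix.nonsing_inv_mul S₂ hunit
  have hTST : (S₂⁻¹)ᵀ * S₂ᵀ = 1 := by rw [← Matrix.transpose_mul, hST, Matrix.transpose_one]
  have hSTT : S₂ᵀ * (S₂⁻¹)ᵀ = 1 := by rw [← Matrix.transpose_mul, hTS, Matrix.transpose_one]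
  refine ⟨S₁ * S₂⁻¹, ?_, ?_⟩
  · calc (S₁ * S₂⁻¹)ᵀ * Omega4 F * (S₁ * S₂⁻¹)
        = (S₂⁻¹)ᵀ * (S₁ᵀ * Omega4 F * S₁) * S₂⁻¹ := by
          rw [Matrix.transpose_mul]
          simp only [Matrix.mul_assoc]
      _ = (S₂⁻¹)ᵀ * (S₂ᵀ * Omega4 F * S₂) * S₂⁻¹ := by rw [hS₁O, hS₂O]
      _ = ((S₂⁻¹)ᵀ * S₂ᵀ) * Omega4 F * (S₂ * S₂⁻¹) := by simp only [Matrix.mul_assoc]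
      _ = Omega4 F := by rw [hTST, hST, Matrix.one_mul, Matrix.mul_one]
  · calc (S₁ * S₂⁻¹)ᵀ * M * (S₁ * S₂⁻¹)
        = (S₂⁻¹)ᵀ * (S₁ᵀ * M * S₁) * S₂⁻¹ := by
          rw [Matrix.transpose_mul]
          simp only [Matrix.mul_assoc]
      _ = (S₂⁻¹)ᵀ * (S₂ᵀ * !![0, s, 0, r; s, 0, c * r, 0; 0, c * r, 0, s; r, 0, s, 0] * S₂)
            * S₂⁻¹ := by rw [hS₁M, ← hS₂N]
      _ = ((S₂⁻¹)ᵀ * S₂ᵀ) * !![0, s, 0, r; s, 0, c * r, 0; 0, c * r, 0, s; r, 0, s, 0]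
            * (S₂ * S₂⁻¹) := by simp only [Matrix.mul_assoc]
      _ = !![0, s, 0, r; s, 0, c * r, 0; 0, c * r, 0, s; r, 0, s, 0] := by
          rw [hTST, hST, Matrix.one_mul, Matrix.mul_one]
end

section
/- Let u ∈ ℚ₂ with u ≠ 0. Then there exist x, y ∈ ℚ₂ with u = x² + 3·y² if and only if the 2-adic valuation of u is even. -/
open PadicInt

private noncomputable abbrev ψ : ℤ_[2] →+* ZMod (2 ^ 3) := PadicInt.toZModPow 3

lemma norm_le_of_psi_eq_zero {x : ℤ_[2]} (h : ψ x = 0) :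
    ‖x‖ ≤ (2 : ℝ) ^ (-(3 : ℤ)) := by
  have hx : x ∈ RingHom.ker ψ := h
  rw [PadicInt.ker_toZModPow] at hx
  have := (PadicInt.norm_le_pow_iff_mem_span_pow x 3).2 hx
  simpa using this

lemma norm_intCast_eq_one {k : ℤ} (h : ¬ (2:ℤ) ∣ k) : ‖(k : ℚ_[2])‖ = 1 :=
  le_antisymm (Padic.norm_int_le_one k)
    (not_lt.1 fun hlt => h (by exact_mod_cast (Padic.norm_intCast_lt_one_iff (p := 2) (k := k)).1 hlt))

lemma norm_add_eq_left' {a b : ℚ_[2]} (h : ‖b‖ < ‖a‖) : ‖a + b‖ = ‖a‖ := by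
  rw [Padic.add_eq_max_of_ne (ne_of_gt h)]
  exact max_eq_left h.le

lemma valuation_eq_of_norm {s : ℚ_[2]} (hs : s ≠ 0) {n : ℤ}
    (h : ‖s‖ = (2 : ℝ) ^ (-n)) : s.valuation = n := by
  have h2 : ‖s‖ = (2:ℝ) ^ (-s.valuation) := by
    simpa using Padic.norm_eq_zpow_neg_valuation hs
  exact neg_injective (zpow_right_injective₀ (a := (2:ℝ)) (by norm_num) (by norm_num)
    (h2.symm.trans h))

lemma exists_sq_of_psi_eq_one {w : ℤ_[2]} (h : ψ w = 1) : ∃ z : ℤ_[2], z ^ 2 = w := by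
  have h1 : ψ (1 - w) = 0 := by rw [map_sub, map_one, h, sub_self]
  have hn : ‖1 - w‖ ≤ (2:ℝ) ^ (-(3:ℤ)) := norm_le_of_psi_eq_zero h1
  set F : Polynomial ℤ_[2] := Polynomial.X ^ 2 - Polynomial.C w with hF
  have heval : F.eval 1 = 1 - w := by simp [hF]
  have hderiv : F.derivative.eval 1 = 2 := by simp [hF]; norm_num
  have hlt : ‖F.eval 1‖ < ‖Polynomial.eval 1 (Polynomial.derivative F)‖ ^ 2 := by
    rw [heval, hderiv]
    have h2 : ‖(2 : ℤ_[2])‖ = ((2:ℝ))⁻¹ := by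
      simpa using PadicInt.norm_p (p := 2)
    rw [h2]
    calc ‖1 - w‖ ≤ (2:ℝ) ^ (-(3:ℤ)) := hn
    _ < ((2:ℝ))⁻¹ ^ 2 := by norm_num
  obtain ⟨z, hz, -⟩ := hensels_lemma hlt
  refine ⟨z, ?_⟩
  have hz' : z ^ 2 - w = 0 := by simpa [hF] using hz
  linear_combination hz'

lemma isUnit_intCast' {k : ℤ} (h : ¬ (2:ℤ) ∣ k) : IsUnit (k : ℤ_[2]) := by
  rw [PadicInt.isUnit_iff, PadicInt.norm_def]
  have hc : ((k : ℤ_[2]) : ℚ_[2]) = (k : ℚ_[2]) := by push_cast; ring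
  rw [hc]; exact norm_intCast_eq_one h

lemma repr_aux (W : ℤ_[2]) (x₀ y₀ : ℤ_[2]) (hcu : IsUnit (x₀ ^ 2 + 3 * y₀ ^ 2))
    (hc : ψ W = ψ (x₀ ^ 2 + 3 * y₀ ^ 2)) : ∃ X Y : ℤ_[2], W = X ^ 2 + 3 * Y ^ 2 := by
  obtain ⟨c, hcc⟩ := hcu
  have h1 : ψ (W * ↑c⁻¹) = 1 := by
    rw [map_mul, hc, ← hcc, ← map_mul, Units.mul_inv, map_one]
  obtain ⟨z, hz⟩ := exists_sq_of_psi_eq_one h1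
  refine ⟨x₀ * z, y₀ * z, ?_⟩
  have hW : W = (x₀ ^ 2 + 3 * y₀ ^ 2) * (W * ↑c⁻¹) := by
    rw [← hcc, mul_comm (c:ℤ_[2]), mul_assoc, Units.inv_mul, mul_one]
  rw [hW, ← hz]; ring

lemma repr_of_unit (W : ℤ_[2]) (hW : ‖W‖ = 1) : ∃ X Y : ℤ_[2], W = X ^ 2 + 3 * Y ^ 2 := by
  have hu : IsUnit W := PadicInt.isUnit_iff.2 hW
  have hinv : ψ W * ψ ↑hu.unit⁻¹ = 1 := by
    rw [← map_mul]
    have h2 : (↑hu.unit : ℤ_[2]) * ↑hu.unit⁻¹ = 1 := Units.mul_inv hu.unit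
    rw [hu.unit_spec] at h2
    rw [h2, map_one]
  have hcases : ψ W = 1 ∨ ψ W = 3 ∨ ψ W = 5 ∨ ψ W = 7 := by
    have key : ∀ a b : ZMod (2 ^ 3), a * b = 1 → a = 1 ∨ a = 3 ∨ a = 5 ∨ a = 7 := by decide
    exact key _ _ hinv
  rcases hcases with h | h | h | h
  · refine repr_aux W 1 0 (by norm_num) ?_
    have e : (1:ℤ_[2]) ^ 2 + 3 * 0 ^ 2 = 1 := by norm_num
    rw [e, map_one, h]
  · refine repr_aux W 0 1 ?_ ?_
    · have e : (0:ℤ_[2]) ^ 2 + 3 * 1 ^ 2 = ((3:ℤ) : ℤ_[2]) := by push_cast; ring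
      rw [e]; exact isUnit_intCast' (by decide)
    · have e : (0:ℤ_[2]) ^ 2 + 3 * 1 ^ 2 = ((3:ℤ) : ℤ_[2]) := by push_cast; ring
      rw [e, map_intCast, h]; decide
  · refine repr_aux W 1 2 ?_ ?_
    · have e : (1:ℤ_[2]) ^ 2 + 3 * 2 ^ 2 = ((13:ℤ) : ℤ_[2]) := by push_cast; ring
      rw [e]; exact isUnit_intCast' (by decide)
    · have e : (1:ℤ_[2]) ^ 2 + 3 * 2 ^ 2 = ((13:ℤ) : ℤ_[2]) := by push_cast; ring
      rw [e, map_intCast, h]; decide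
  · refine repr_aux W 2 1 ?_ ?_
    · have e : (2:ℤ_[2]) ^ 2 + 3 * 1 ^ 2 = ((7:ℤ) : ℤ_[2]) := by push_cast; ring
      rw [e]; exact isUnit_intCast' (by decide)
    · have e : (2:ℤ_[2]) ^ 2 + 3 * 1 ^ 2 = ((7:ℤ) : ℤ_[2]) := by push_cast; ring
      rw [e, map_intCast, h]; decide

lemma norm_coe_eq_one_of_psi {S : ℤ_[2]} {k : ℤ} (hk : ¬ (2:ℤ) ∣ k)
    (h : ψ (S - (k : ℤ_[2])) = 0) : ‖(S : ℚ_[2])‖ = 1 := by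
  have hb : ‖S - (k : ℤ_[2])‖ ≤ (2:ℝ) ^ (-(3:ℤ)) := norm_le_of_psi_eq_zero h
  have hrep : (S : ℚ_[2]) = (k : ℚ_[2]) + ((S - (k : ℤ_[2]) : ℤ_[2]) : ℚ_[2]) := by
    push_cast; ring
  rw [hrep, norm_add_eq_left', norm_intCast_eq_one hk]
  rw [norm_intCast_eq_one hk]
  calc ‖((S - (k : ℤ_[2]) : ℤ_[2]) : ℚ_[2])‖ = ‖(S - (k : ℤ_[2]) : ℤ_[2])‖ :=
        (PadicInt.norm_def).symm
  _ ≤ (2:ℝ) ^ (-(3:ℤ)) := hb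
  _ < 1 := by norm_num

lemma norm_coe_eq_of_psi_four {S : ℤ_[2]} (h : ψ (S - 4) = 0) :
    ‖(S : ℚ_[2])‖ = (2:ℝ) ^ (-(2:ℤ)) := by
  have hb : ‖S - 4‖ ≤ (2:ℝ) ^ (-(3:ℤ)) := norm_le_of_psi_eq_zero h
  have h4 : ‖(4 : ℚ_[2])‖ = (2:ℝ) ^ (-(2:ℤ)) := by
    have e : (4 : ℚ_[2]) = (2 : ℚ_[2]) ^ 2 := by norm_num
    have h2 : ‖(2 : ℚ_[2])‖ = (2:ℝ)⁻¹ := by simpa using Padic.norm_p (p := 2)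
    rw [e, _root_.norm_pow, h2]; norm_num
  have hrep : (S : ℚ_[2]) = (4 : ℚ_[2]) + ((S - 4 : ℤ_[2]) : ℚ_[2]) := by
    push_cast
    have : ((4 : ℤ_[2]) : ℚ_[2]) = (4 : ℚ_[2]) := by norm_cast
    rw [this]; ring
  rw [hrep, norm_add_eq_left', h4]
  rw [h4]
  calc ‖((S - 4 : ℤ_[2]) : ℚ_[2])‖ = ‖(S - 4 : ℤ_[2])‖ := (PadicInt.norm_def).symm
  _ ≤ (2:ℝ) ^ (-(3:ℤ)) := hb
  _ < (2:ℝ) ^ (-(2:ℤ)) := by norm_num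

lemma even_val_sq_add_three (t : ℚ_[2]) (hs : t ^ 2 + 3 ≠ 0) :
    Even (t ^ 2 + 3).valuation := by
  rcases le_or_gt ‖t‖ 1 with ht | ht
  · set T : ℤ_[2] := ⟨t, ht⟩ with hT
    set S : ℤ_[2] := T ^ 2 + 3 with hS
    have hScoe : ((S : ℚ_[2])) = t ^ 2 + 3 := by
      rw [hS]; push_cast; rfl
    have hSne : (S : ℚ_[2]) ≠ 0 := by rw [hScoe]; exact hs
    have hψS : ψ S = (ψ T) ^ 2 + 3 := by
      rw [hS, map_add, map_pow]
      congr 1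
      have e3 : (3 : ℤ_[2]) = ((3:ℤ) : ℤ_[2]) := by norm_cast
      rw [e3, map_intCast]; decide
    have hdec : ∀ a : ZMod (2 ^ 3), a ^ 2 + 3 = 3 ∨ a ^ 2 + 3 = 4 ∨ a ^ 2 + 3 = 7 := by decide
    rw [← hScoe]
    rcases hdec (ψ T) with h | h | h
    · have h0 : ψ (S - ((3:ℤ) : ℤ_[2])) = 0 := by
        rw [map_sub, hψS, h, map_intCast]; decide
      have hn := norm_coe_eq_one_of_psi (by decide) h0
      rw [valuation_eq_of_norm hSne (n := 0) (by rw [hn]; norm_num)]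
      exact Even.zero
    · have h0 : ψ (S - 4) = 0 := by
        have e4 : ψ (4 : ℤ_[2]) = 4 := by
          have : (4 : ℤ_[2]) = ((4:ℤ) : ℤ_[2]) := by push_cast; ring
          rw [this, map_intCast]; decide
        rw [map_sub, hψS, h, e4, sub_self]
      have hn := norm_coe_eq_of_psi_four h0
      rw [valuation_eq_of_norm hSne (n := 2) hn]
      exact ⟨1, by ring⟩
    · have h0 : ψ (S - ((7:ℤ) : ℤ_[2])) = 0 := by
        rw [map_sub, hψS, h, map_intCast]; decide
      have hn := norm_coe_eq_one_of_psi (by decide) h0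
      rw [valuation_eq_of_norm hSne (n := 0) (by rw [hn]; norm_num)]
      exact Even.zero
  · have ht0 : t ≠ 0 := by
      intro h; rw [h] at ht; simp at ht; linarith
    have h3le : ‖(3 : ℚ_[2])‖ ≤ 1 := by
      have := Padic.norm_int_le_one (p := 2) 3
      simpa using this
    have htt : ‖t ^ 2‖ = ‖t‖ ^ 2 := norm_pow t 2
    have hlt : ‖(3 : ℚ_[2])‖ < ‖t ^ 2‖ := by
      rw [htt]; nlinarith
    have hnorm : ‖t ^ 2 + 3‖ = ‖t‖ ^ 2 := by rw [norm_add_eq_left' hlt, htt]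
    have hv : ‖t‖ = (2:ℝ) ^ (-t.valuation) := by
      simpa using Padic.norm_eq_zpow_neg_valuation ht0
    have : ‖t ^ 2 + 3‖ = (2:ℝ) ^ (-(t.valuation + t.valuation)) := by
      rw [hnorm, hv, ← zpow_natCast ((2:ℝ) ^ (-t.valuation)) 2, ← zpow_mul]
      congr 1
      push_cast
      ring
    rw [valuation_eq_of_norm hs this]
    exact ⟨t.valuation, rfl⟩


/-- A nonzero `2`-adic number is of the form `x² + 3·y²` if and only if its `2`-adic
valuation is even. -/
theorem two_adic_x_sq_add_three_y_sq_iff_even_valuation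
    (u : ℚ_[2]) (hu : u ≠ 0) :
    (∃ x y : ℚ_[2], u = x ^ 2 + 3 * y ^ 2) ↔ Even u.valuation := by
  constructor
  · rintro ⟨x, y, rfl⟩
    by_cases hy : y = 0
    · subst hy
      have hx : x ≠ 0 := by
        intro h; apply hu; rw [h]; ring
      have e : x ^ 2 + 3 * 0 ^ 2 = x * x := by ring
      rw [e, Padic.valuation_mul hx hx]
      exact ⟨x.valuation, rfl⟩
    · set t := x / y with htdef
      have hxy : x = y * t := by rw [htdef]; field_simp
      have hfac : x ^ 2 + 3 * y ^ 2 = (y * y) * (t ^ 2 + 3) := by rw [hxy]; ring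
      have hyne : y * y ≠ 0 := mul_ne_zero hy hy
      have hsne : t ^ 2 + 3 ≠ 0 := by
        intro h; apply hu; rw [hfac, h, mul_zero]
      rw [hfac, Padic.valuation_mul hyne hsne, Padic.valuation_mul hy hy]
      obtain ⟨m, hm⟩ := even_val_sq_add_three t hsne
      exact ⟨y.valuation + m, by rw [hm]; ring⟩
  · rintro ⟨k, hk⟩
    set π : ℚ_[2] := (2:ℚ_[2]) ^ k with hπ
    have h2ne : (2:ℚ_[2]) ≠ 0 := by norm_num
    have hπne : π ≠ 0 := zpow_ne_zero k h2ne
    set v : ℚ_[2] := u / (π * π) with hv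
    have hπn : ‖π‖ = (2:ℝ) ^ (-k) := by
      rw [hπ]
      simpa using Padic.norm_p_zpow (p := 2) k
    have hun : ‖u‖ = (2:ℝ) ^ (-(k + k)) := by
      have h1 := Padic.norm_eq_zpow_neg_valuation hu
      rw [hk] at h1
      simpa using h1
    have hvnorm : ‖v‖ = 1 := by
      rw [hv, norm_div, _root_.norm_mul, hπn, hun, ← zpow_add₀ (by norm_num : (2:ℝ) ≠ 0)]
      have e : -(k + k) = -k + -k := by ring
      rw [e, div_self (zpow_ne_zero _ (by norm_num : (2:ℝ) ≠ 0))]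
    set W : ℤ_[2] := ⟨v, hvnorm.le⟩ with hW
    have hWn : ‖W‖ = 1 := hvnorm
    obtain ⟨X, Y, hXY⟩ := repr_of_unit W hWn
    refine ⟨(X : ℚ_[2]) * π, (Y : ℚ_[2]) * π, ?_⟩
    have hu' : u = (π * π) * v := by
      rw [hv]; field_simp
    have hvW : v = ((W : ℤ_[2]) : ℚ_[2]) := rfl
    rw [hu', hvW, hXY]
    have e3 : (((3:ℤ_[2]) : ℚ_[2])) = (3 : ℚ_[2]) := by norm_cast
    push_cast [e3]
    ring
end

section
/- Let p be a prime with p ≡ 3 (mod 4) and let a, b ∈ ℚ_p with a ≠ 0 and b ≠ 0. Then a + b·i is a square in ℚ_p(i), i.e. there exist r, s ∈ ℚ_p with a = r² − s² and b = 2·r·s, if and only if min(valuation of a, valuation of b) is even and a² + b² is a square in ℚ_p. -/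
namespace PGS

variable {p : ℕ} [hpp : Fact p.Prime]

lemma val_neg (x : ℚ_[p]) : (-x).valuation = x.valuation := by
  rcases eq_or_ne x 0 with rfl | hx
  · simp
  have hm1 : (-1 : ℚ_[p]) ≠ 0 := by norm_num
  have h1 : ((-1 : ℚ_[p]) * (-1)).valuation = (-1 : ℚ_[p]).valuation + (-1 : ℚ_[p]).valuation :=
    Padic.valuation_mul hm1 hm1
  simp only [neg_mul, one_mul, neg_neg, Padic.valuation_one] at h1
  have h2 : (-1 : ℚ_[p]).valuation = 0 := by omega
  have : (-x) = (-1) * x := by ring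
  rw [this, Padic.valuation_mul hm1 hx, h2, zero_add]

lemma val_add_lt {x y : ℚ_[p]} (hx : x ≠ 0) (hy : y ≠ 0)
    (h : x.valuation < y.valuation) : x + y ≠ 0 ∧ (x + y).valuation = x.valuation := by
  have hxy : x + y ≠ 0 := by
    intro h0
    have hxny : x = -y := eq_neg_of_add_eq_zero_left h0
    rw [hxny, val_neg] at h; omega
  refine ⟨hxy, le_antisymm ?_ ?_⟩
  · have hrw : (x + y) + (-y) = x := by ring
    have h2 := Padic.le_valuation_add (p := p) (x := x + y) (y := -y) (by rw [hrw]; exact hx)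
    rw [hrw, val_neg] at h2
    omega
  · have := Padic.le_valuation_add (x := x) (y := y) hxy
    omega

lemma val_sq {x : ℚ_[p]} (hx : x ≠ 0) : (x ^ 2).valuation = 2 * x.valuation := by
  rw [pow_two, Padic.valuation_mul hx hx]; ring

lemma val_two (hp2 : p ≠ 2) : (2 : ℚ_[p]).valuation = 0 := by
  rw [Padic.valuation_ofNat, padicValNat.eq_zero_of_not_dvd]
  · simp
  intro h
  exact hp2 ((Nat.prime_dvd_prime_iff_eq hpp.out Nat.prime_two).mp h)

lemma val_zero_of_norm_one {x : ℚ_[p]} (hx : x ≠ 0) (h : ‖x‖ = 1) : x.valuation = 0 := by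
  have := Padic.norm_eq_zpow_neg_valuation hx
  rw [h] at this
  have hp1 : (1 : ℝ) < (p : ℝ) := by exact_mod_cast hpp.out.one_lt
  have := zpow_right_injective₀ (by positivity) (ne_of_gt hp1) (this.symm.trans (zpow_zero _).symm)
  omega

lemma norm_one_of_val_zero {x : ℚ_[p]} (hx : x ≠ 0) (h : x.valuation = 0) : ‖x‖ = 1 := by
  rw [Padic.norm_eq_zpow_neg_valuation hx, h]; simp

lemma norm_zpart {x : ℚ_[p]} (hx : x ≠ 0) :
    ‖x * (p : ℚ_[p]) ^ (-x.valuation)‖ = 1 := by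
  have hpR : (p : ℝ) ≠ 0 := Nat.cast_ne_zero.mpr hpp.out.ne_zero
  rw [norm_mul, Padic.norm_eq_zpow_neg_valuation hx, Padic.norm_p_zpow, neg_neg,
    ← zpow_add₀ hpR]
  simp

noncomputable def unitPart {x : ℚ_[p]} (hx : x ≠ 0) : ℤ_[p] :=
  ⟨x * (p : ℚ_[p]) ^ (-x.valuation), le_of_eq (norm_zpart hx)⟩

lemma coe_unitPart {x : ℚ_[p]} (hx : x ≠ 0) :
    (unitPart hx : ℚ_[p]) = x * (p : ℚ_[p]) ^ (-x.valuation) := rfl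

lemma norm_unitPart {x : ℚ_[p]} (hx : x ≠ 0) : ‖unitPart hx‖ = 1 := norm_zpart hx

lemma unitPart_spec {x : ℚ_[p]} (hx : x ≠ 0) :
    x = (unitPart hx : ℚ_[p]) * (p : ℚ_[p]) ^ (x.valuation) := by
  have hp0 : (p : ℚ_[p]) ≠ 0 := Nat.cast_ne_zero.mpr hpp.out.ne_zero
  rw [coe_unitPart, mul_assoc, ← zpow_add₀ hp0]
  simp

lemma isUnit_iff_toZMod_ne_zero (z : ℤ_[p]) : IsUnit z ↔ PadicInt.toZMod z ≠ 0 := by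
  constructor
  · intro h h0
    have : z ∈ RingHom.ker (PadicInt.toZMod (p := p)) := by rwa [RingHom.mem_ker]
    rw [PadicInt.ker_toZMod] at this
    exact (IsLocalRing.mem_maximalIdeal z).mp this h
  · intro h
    by_contra hu
    have : z ∈ IsLocalRing.maximalIdeal ℤ_[p] := (IsLocalRing.mem_maximalIdeal z).mpr hu
    rw [← PadicInt.ker_toZMod, RingHom.mem_ker] at this
    exact h this

lemma isSquare_of_residue (hp2 : p ≠ 2) {z : ℤ_[p]} (hz : ‖z‖ = 1)
    (hres : IsSquare (PadicInt.toZMod z)) : IsSquare z := by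
  obtain ⟨t, ht⟩ := hres
  have hz0 : PadicInt.toZMod z ≠ 0 := (isUnit_iff_toZMod_ne_zero z).mp (PadicInt.isUnit_iff.mpr hz)
  have ht0 : t ≠ 0 := by rintro rfl; simp at ht; exact hz0 ht
  set A : ℤ_[p] := (t.val : ℤ_[p]) with hA
  have hAt : PadicInt.toZMod A = t := by
    rw [hA, map_natCast, ZMod.natCast_val, ZMod.cast_id]
  have hAunit : IsUnit A := (isUnit_iff_toZMod_ne_zero A).mpr (by rw [hAt]; exact ht0)
  have hAnorm : ‖A‖ = 1 := PadicInt.isUnit_iff.mp hAunit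
  have h2 : IsUnit (2 : ℤ_[p]) := by
    rw [isUnit_iff_toZMod_ne_zero]
    have : (PadicInt.toZMod (2 : ℤ_[p])) = ((2:ℕ) : ZMod p) := by
      rw [show (2 : ℤ_[p]) = ((2:ℕ) : ℤ_[p]) by norm_num, map_natCast]
    rw [this, Ne, ZMod.natCast_eq_zero_iff]
    intro h
    exact hp2 ((Nat.prime_dvd_prime_iff_eq hpp.out Nat.prime_two).mp h)
  have h2norm : ‖(2 : ℤ_[p])‖ = 1 := PadicInt.isUnit_iff.mp h2
  set F : Polynomial ℤ_[p] := Polynomial.X ^ 2 - Polynomial.C z with hF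
  have hFeval : ∀ y : ℤ_[p], F.eval y = y ^ 2 - z := by intro y; simp [hF]
  have hFderiv : ∀ y : ℤ_[p], F.derivative.eval y = 2 * y := by
    intro y
    simp [hF, Polynomial.derivative_sub, Polynomial.derivative_pow]
  have hnorm : ‖F.eval A‖ < ‖F.derivative.eval A‖ ^ 2 := by
    rw [hFeval, hFderiv, norm_mul, h2norm, hAnorm]
    norm_num
    have : PadicInt.toZMod (A ^ 2 - z) = 0 := by
      rw [map_sub, map_pow, hAt, ht]; ring
    have hmem : A ^ 2 - z ∈ IsLocalRing.maximalIdeal ℤ_[p] := by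
      rw [← PadicInt.ker_toZMod, RingHom.mem_ker]; exact this
    have := (IsLocalRing.mem_maximalIdeal _).mp hmem
    rcases lt_or_eq_of_le (PadicInt.norm_le_one (A ^ 2 - z)) with h | h
    · exact h
    · exact absurd (PadicInt.isUnit_iff.mpr h) this
  obtain ⟨y, hy, -⟩ := hensels_lemma hnorm
  rw [Polynomial.coe_aeval_eq_eval, hFeval] at hy
  refine ⟨y, ?_⟩
  have : y ^ 2 = z := by linear_combination hy
  rw [← this]; ring

lemma isSquare_of_even_val (hp2 : p ≠ 2) {u : ℚ_[p]} (hu : u ≠ 0) (heu : Even u.valuation)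
    (hres : IsSquare (PadicInt.toZMod (unitPart hu))) : IsSquare u := by
  have hp0 : (p : ℚ_[p]) ≠ 0 := Nat.cast_ne_zero.mpr hpp.out.ne_zero
  obtain ⟨k, hk⟩ := heu
  obtain ⟨y, hy⟩ := isSquare_of_residue hp2 (norm_unitPart hu) hres
  refine ⟨(y : ℚ_[p]) * (p : ℚ_[p]) ^ k, ?_⟩
  have h1 := unitPart_spec hu
  rw [hy] at h1
  rw [h1, hk, zpow_add₀ hp0]
  push_cast
  ring

lemma isSquare_or (hp3 : p % 4 = 3) {u u' w : ℚ_[p]} (hu : u ≠ 0) (hu' : u' ≠ 0) (hw : w ≠ 0)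
    (heu : Even u.valuation) (heu' : Even u'.valuation) (h : u * u' = -(w ^ 2)) :
    IsSquare u ∨ IsSquare u' := by
  have hp2 : p ≠ 2 := by intro h2; rw [h2] at hp3; omega
  have hp0 : (p : ℚ_[p]) ≠ 0 := Nat.cast_ne_zero.mpr hpp.out.ne_zero
  have hvw : u.valuation + u'.valuation = 2 * w.valuation := by
    have h1 : (u * u').valuation = u.valuation + u'.valuation := Padic.valuation_mul hu hu'
    have h2 : (-(w^2)).valuation = 2 * w.valuation := by
      rw [val_neg, val_sq hw]
    rw [h] at h1
    omega
  have e1 : ((unitPart hu : ℚ_[p])) * (unitPart hu') = -((unitPart hw : ℚ_[p]) ^ 2) := by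
    rw [coe_unitPart, coe_unitPart, coe_unitPart, mul_pow,
      ← zpow_natCast ((p : ℚ_[p]) ^ (-w.valuation)) 2, ← zpow_mul]
    have he : -w.valuation * ((2:ℕ):ℤ) = (-u.valuation) + (-u'.valuation) := by push_cast; omega
    rw [he, zpow_add₀ hp0]
    linear_combination ((p:ℚ_[p])^(-u.valuation) * (p:ℚ_[p])^(-u'.valuation)) * h
  have E : unitPart hu * unitPart hu' = -((unitPart hw) ^ 2) := by
    apply Subtype.ext
    push_cast
    exact e1
  have hτ : ∀ {x : ℚ_[p]} (hx : x ≠ 0), PadicInt.toZMod (unitPart hx) ≠ 0 := fun hx =>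
    (isUnit_iff_toZMod_ne_zero _).mp (PadicInt.isUnit_iff.mpr (norm_unitPart hx))
  have Ez : PadicInt.toZMod (unitPart hu) * PadicInt.toZMod (unitPart hu')
      = -((PadicInt.toZMod (unitPart hw)) ^ 2) := by
    rw [← map_mul, E, map_neg, map_pow]
  have hm1 : ¬ IsSquare (-1 : ZMod p) := by
    rw [ZMod.exists_sq_eq_neg_one_iff]
    simp [hp3]
  have hχm1 : quadraticChar (ZMod p) (-1) = -1 :=
    quadraticChar_neg_one_iff_not_isSquare.mpr hm1
  have hχ : quadraticChar (ZMod p) (PadicInt.toZMod (unitPart hu)) *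
      quadraticChar (ZMod p) (PadicInt.toZMod (unitPart hu')) = -1 := by
    rw [← map_mul, Ez, show -((PadicInt.toZMod (unitPart hw)) ^ 2)
        = (-1) * (PadicInt.toZMod (unitPart hw)) ^ 2 by ring, map_mul, hχm1,
      quadraticChar_sq_one' (hτ hw)]
    ring
  rcases quadraticChar_dichotomy (hτ hu) with h1 | h1
  · left
    exact isSquare_of_even_val hp2 hu heu
      ((quadraticChar_one_iff_isSquare (hτ hu)).mp h1)
  · right
    have h2 : quadraticChar (ZMod p) (PadicInt.toZMod (unitPart hu')) = 1 := by
      rw [h1] at hχ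
      linarith [hχ]
    exact isSquare_of_even_val hp2 hu' heu'
      ((quadraticChar_one_iff_isSquare (hτ hu')).mp h2)

lemma val_one_add_sq (hp3 : p % 4 = 3) {t : ℚ_[p]} (ht : t ≠ 0) (hv : 0 ≤ t.valuation) :
    1 + t ^ 2 ≠ 0 ∧ (1 + t ^ 2).valuation = 0 := by
  rcases lt_or_eq_of_le hv with hpos | hzero
  · have h2 : (t ^ 2).valuation = 2 * t.valuation := val_sq ht
    have := val_add_lt (x := (1 : ℚ_[p])) (y := t ^ 2) one_ne_zero (pow_ne_zero _ ht)
      (by rw [Padic.valuation_one, h2]; omega)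
    exact ⟨this.1, by rw [this.2, Padic.valuation_one]⟩
  · have hnorm : ‖t‖ = 1 := norm_one_of_val_zero ht hzero.symm
    set z : ℤ_[p] := ⟨t, le_of_eq hnorm⟩ with hz
    have hz1 : ‖z‖ = 1 := hnorm
    have hres : PadicInt.toZMod (1 + z ^ 2) ≠ 0 := by
      rw [map_add, map_one, map_pow]
      intro h0
      have hsq : IsSquare (-1 : ZMod p) :=
        ⟨PadicInt.toZMod z, by linear_combination -h0⟩
      rw [ZMod.exists_sq_eq_neg_one_iff] at hsq
      exact hsq hp3
    have hn : ‖(1 + z ^ 2 : ℤ_[p])‖ = 1 :=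
      PadicInt.isUnit_iff.mp ((isUnit_iff_toZMod_ne_zero _).mpr hres)
    have hcoe : ((1 + z ^ 2 : ℤ_[p]) : ℚ_[p]) = 1 + t ^ 2 := by
      push_cast [hz]
      rfl
    have hn' : ‖(1 + t ^ 2 : ℚ_[p])‖ = 1 := by
      rw [← hcoe, PadicInt.padic_norm_e_of_padicInt, hn]
    have hne : (1 + t ^ 2 : ℚ_[p]) ≠ 0 := by
      intro h0; rw [h0, norm_zero] at hn'; norm_num at hn'
    exact ⟨hne, val_zero_of_norm_one hne hn'⟩

lemma val_sq_add_sq (hp3 : p % 4 = 3) {a b : ℚ_[p]} (ha : a ≠ 0) (hb : b ≠ 0) :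
    a ^ 2 + b ^ 2 ≠ 0 ∧
      (a ^ 2 + b ^ 2).valuation = 2 * min a.valuation b.valuation := by
  wlog hab : a.valuation ≤ b.valuation with H
  · rw [add_comm, min_comm]
    exact H hp3 hb ha (le_of_not_ge hab)
  have ht : b / a ≠ 0 := div_ne_zero hb ha
  have hvt : a.valuation + (b / a).valuation = b.valuation := by
    rw [← Padic.valuation_mul ha ht]
    congr 1
    field_simp
  obtain ⟨hne0, hval0⟩ := val_one_add_sq hp3 ht (by omega)
  have key : a ^ 2 + b ^ 2 = a ^ 2 * (1 + (b / a) ^ 2) := by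
    field_simp
  constructor
  · rw [key]; exact mul_ne_zero (pow_ne_zero _ ha) hne0
  · rw [key, Padic.valuation_mul (pow_ne_zero _ ha) hne0, val_sq ha, hval0,
      min_eq_left hab]
    ring

lemma construct {a b c r : ℚ_[p]} (hb : b ≠ 0) (hc : c * c = a ^ 2 + b ^ 2)
    (hr : r * r = (a + c) / 2) :
    ∃ r s : ℚ_[p], a = r ^ 2 - s ^ 2 ∧ b = 2 * r * s := by
  have h2 : (2 : ℚ_[p]) ≠ 0 := two_ne_zero
  have hr0 : r ≠ 0 := by
    rintro rfl
    rw [zero_mul, eq_comm, div_eq_zero_iff] at hr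
    rcases hr with hr | hr
    · have hca : c = -a := by linear_combination hr
      rw [hca] at hc
      have : b ^ 2 = 0 := by linear_combination -hc
      exact hb (by simpa using this)
    · exact h2 hr
  refine ⟨r, b / (2 * r), ?_, ?_⟩
  · field_simp
    linear_combination -hc - 2*(2*r^2 - a + c) * hr
  · field_simp

end PGS

/-- For `p ≡ 3 mod 4` and nonzero `a, b ∈ ℚ_p`, the element `a + b·i` is a square in
`ℚ_p(i)` (expressed as `a = r² − s²`, `b = 2·r·s`) if and only if
`min (val a) (val b)` is even and `a² + b²` is a square in `ℚ_p`. -/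
theorem padic_gaussian_square_iff
    (p : ℕ) [Fact p.Prime] (hp : p % 4 = 3) (a b : ℚ_[p]) (ha : a ≠ 0) (hb : b ≠ 0) :
    (∃ r s : ℚ_[p], a = r ^ 2 - s ^ 2 ∧ b = 2 * r * s) ↔
    (Even (min a.valuation b.valuation) ∧ IsSquare (a ^ 2 + b ^ 2)) := by
  have hp2 : p ≠ 2 := by rintro rfl; omega
  constructor
  · rintro ⟨r, s, har, hbs⟩
    have hr : r ≠ 0 := by rintro rfl; apply hb; rw [hbs]; ring
    have hs : s ≠ 0 := by rintro rfl; apply hb; rw [hbs]; ring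
    refine ⟨?_, ⟨r ^ 2 + s ^ 2, by rw [har, hbs]; ring⟩⟩
    have hvb : b.valuation = r.valuation + s.valuation := by
      rw [hbs, Padic.valuation_mul (mul_ne_zero two_ne_zero hr) hs,
        Padic.valuation_mul two_ne_zero hr, PGS.val_two hp2]
      ring
    have har' : a = r ^ 2 + (-(s ^ 2)) := by rw [har]; ring
    rcases lt_trichotomy r.valuation s.valuation with hlt | heqv | hgt
    · have hva : a.valuation = 2 * r.valuation := by
        rw [har']
        exact (PGS.val_add_lt (pow_ne_zero _ hr) (neg_ne_zero.mpr (pow_ne_zero _ hs))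
          (by rw [PGS.val_sq hr, PGS.val_neg, PGS.val_sq hs]; omega)).2.trans (PGS.val_sq hr)
      rw [min_eq_left (by omega)]
      exact ⟨r.valuation, by omega⟩
    · -- equal valuations
      have hva : 2 * r.valuation ≤ a.valuation := by
        have := Padic.le_valuation_add (x := r ^ 2) (y := -(s ^ 2)) (by rw [← har']; exact ha)
        rw [PGS.val_sq hr, PGS.val_neg, PGS.val_sq hs, ← har'] at this
        omega
      rw [min_eq_right (by omega)]
      exact ⟨r.valuation, by omega⟩
    · have hva : a.valuation = 2 * s.valuation := by
        have har'' : a = (-(s ^ 2)) + r ^ 2 := by rw [har]; ring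
        rw [har'']
        have := (PGS.val_add_lt (neg_ne_zero.mpr (pow_ne_zero _ hs)) (pow_ne_zero _ hr)
          (by rw [PGS.val_sq hr, PGS.val_neg, PGS.val_sq hs]; omega)).2
        rw [this, PGS.val_neg, PGS.val_sq hs]
      rw [min_eq_left (by omega)]
      exact ⟨s.valuation, by omega⟩
  · rintro ⟨hmin, c, hc⟩
    obtain ⟨hne, hval⟩ := PGS.val_sq_add_sq hp ha hb
    have hc0 : c ≠ 0 := by rintro rfl; rw [mul_zero] at hc; exact hne hc
    have hvc : c.valuation = min a.valuation b.valuation := by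
      have h1 : (c * c).valuation = 2 * c.valuation := by
        rw [← pow_two, PGS.val_sq hc0]
      rw [← hc, hval] at h1
      omega
    have h2 : (2 : ℚ_[p]) ≠ 0 := two_ne_zero
    set u : ℚ_[p] := (a + c) / 2 with hu
    set u' : ℚ_[p] := (a - c) / 2 with hu'
    have huu' : u * u' = -((b / 2) ^ 2) := by
      rw [hu, hu']
      field_simp
      linear_combination hc
    have hw0 : (b / 2 : ℚ_[p]) ≠ 0 := div_ne_zero hb h2
    have hprod0 : u * u' ≠ 0 := by
      rw [huu']
      exact neg_ne_zero.mpr (pow_ne_zero _ hw0)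
    have hu0 : u ≠ 0 := fun h => hprod0 (by rw [h, zero_mul])
    have hu'0 : u' ≠ 0 := fun h => hprod0 (by rw [h, mul_zero])
    have hvb2 : (b / 2).valuation = b.valuation := by
      have hbb : (b / 2) * 2 = b := by field_simp
      have := Padic.valuation_mul hw0 h2
      rw [hbb, PGS.val_two hp2] at this
      omega
    have hsum : u.valuation + u'.valuation = 2 * b.valuation := by
      have h1 := Padic.valuation_mul hu0 hu'0
      rw [huu', PGS.val_neg, PGS.val_sq hw0, hvb2] at h1
      omega
    have hac : u * 2 = a + c := by rw [hu]; field_simp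
    have hac' : u' * 2 = a - c := by rw [hu']; field_simp
    have hvu : u.valuation = (a + c).valuation := by
      have := Padic.valuation_mul hu0 h2
      rw [hac, PGS.val_two hp2] at this
      omega
    have hvu' : u'.valuation = (a - c).valuation := by
      have := Padic.valuation_mul hu'0 h2
      rw [hac', PGS.val_two hp2] at this
      omega
    have hac0 : a + c ≠ 0 := by rw [← hac]; exact mul_ne_zero hu0 h2
    have hac0' : a - c ≠ 0 := by rw [← hac']; exact mul_ne_zero hu'0 h2
    set m := min a.valuation b.valuation with hm
    have hminuu : min u.valuation u'.valuation = m := by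
      rcases lt_or_ge b.valuation a.valuation with hba | hab
      · have hmb : m = b.valuation := by rw [hm]; omega
        have h1 : (c + a).valuation = c.valuation :=
          (PGS.val_add_lt hc0 ha (by omega)).2
        have h2' : (-c + a).valuation = c.valuation := by
          have := (PGS.val_add_lt (neg_ne_zero.mpr hc0) ha
            (by rw [PGS.val_neg]; omega)).2
          rw [this, PGS.val_neg]
        rw [hvu, hvu', show a + c = c + a by ring, show a - c = -c + a by ring, h1, h2']
        omega
      · have hma : m = a.valuation := by rw [hm]; omega
        have l1 : m ≤ u.valuation := by
          have := Padic.le_valuation_add (x := a) (y := c) hac0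
          rw [hvu]; omega
        have l2 : m ≤ u'.valuation := by
          have := Padic.le_valuation_add (x := a) (y := -c) (by rwa [← sub_eq_add_neg])
          rw [hvu', sub_eq_add_neg, PGS.val_neg] at *
          omega
        have l3 : min u.valuation u'.valuation ≤ m := by
          have := Padic.le_valuation_add (x := u) (y := u') (by
            rw [show u + u' = a by rw [hu, hu']; ring]; exact ha)
          rw [show u + u' = a by rw [hu, hu']; ring] at this
          omega
        exact le_antisymm l3 (le_min l1 l2)
    have heu : Even u.valuation ∧ Even u'.valuation := by
      obtain ⟨k, hk⟩ := hmin
      rcases le_total u.valuation u'.valuation with hle | hle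
      · have e1 : u.valuation = m := by rw [← hminuu, min_eq_left hle]
        exact ⟨⟨k, by omega⟩, ⟨b.valuation - k, by omega⟩⟩
      · have e1 : u'.valuation = m := by rw [← hminuu, min_eq_right hle]
        exact ⟨⟨b.valuation - k, by omega⟩, ⟨k, by omega⟩⟩
    rcases PGS.isSquare_or hp hu0 hu'0 hw0 heu.1 heu.2 huu' with ⟨r, hr⟩ | ⟨r, hr⟩
    · exact PGS.construct hb hc.symm (by rw [← hr, hu])
    · exact PGS.construct (c := -c) (r := r) hb (by linear_combination -hc)
        (by rw [← hr, hu']; ring)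
end

section
/- Let F be a field of characteristic different from 2, let c ∈ F, and let K be a field with an F-algebra structure containing an element α with α² = algebraMap F K c, with α not in the range of algebraMap F K, and such that every element of K equals algebraMap F K x + (algebraMap F K y) * α for some x, y ∈ F. Then for all a, b ∈ F with b ≠ 0: the element algebraMap F K a + (algebraMap F K b) * α is a square in K if and only if there exists s ∈ F with s² = a² − b²·c such that (a + s)/2 is a square in F or (a − s)/2 is a square in F. -/
/-- Criterion for `a + b·α` to be a square in a quadratic extension `K = F[α]` with
`α² = c`: it is a square iff `a² − b²·c` has a square root `s` in `F` such that
`(a + s)/2` or `(a − s)/2` is a square in `F`. -/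
theorem square_in_quadratic_extension_iff
    (F K : Type*) [Field F] [Field K] [Algebra F K]
    (hchar : ringChar F ≠ 2) (c : F) (α : K)
    (hα : α ^ 2 = algebraMap F K c)
    (hαn : α ∉ Set.range (algebraMap F K))
    (hK : ∀ z : K, ∃ x y : F, z = algebraMap F K x + algebraMap F K y * α)
    (a b : F) (hb : b ≠ 0) :
    IsSquare (algebraMap F K a + algebraMap F K b * α) ↔
    ∃ s : F, s ^ 2 = a ^ 2 - b ^ 2 * c ∧
      (IsSquare ((a + s) / 2) ∨ IsSquare ((a - s) / 2)) := by
  have hinj := (algebraMap F K).injective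
  have h2 : (2:F) ≠ 0 := Ring.two_ne_zero hchar
  have huniq : ∀ x y x' y' : F,
      algebraMap F K x + algebraMap F K y * α =
        algebraMap F K x' + algebraMap F K y' * α → x = x' ∧ y = y' := by
    intro x y x' y' h
    by_cases hy : y = y'
    · subst hy
      have hx : algebraMap F K x = algebraMap F K x' := by linear_combination h
      exact ⟨hinj hx, rfl⟩
    · exfalso
      apply hαn
      have hne : algebraMap F K (y - y') ≠ 0 := by
        rw [map_ne_zero]; exact sub_ne_zero.2 hy
      refine ⟨(x' - x)/(y - y'), ?_⟩
      rw [map_div₀, div_eq_iff hne]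
      simp only [map_sub]
      linear_combination -h
  constructor
  · rintro ⟨r, hr⟩
    obtain ⟨x, y, hxy⟩ := hK r
    have hkey : algebraMap F K a + algebraMap F K b * α =
        algebraMap F K (x^2 + y^2*c) + algebraMap F K (2*x*y) * α := by
      rw [hr, hxy]
      simp only [map_add, map_mul, map_pow, map_ofNat]
      linear_combination (algebraMap F K y)^2 * hα
    obtain ⟨ha, hb'⟩ := huniq _ _ _ _ hkey
    refine ⟨x^2 - y^2*c, by rw [ha, hb']; ring, Or.inl ⟨x, ?_⟩⟩
    rw [ha]
    field_simp
    ring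
  · have main : ∀ s : F, s^2 = a^2 - b^2*c → IsSquare ((a + s)/2) →
        IsSquare (algebraMap F K a + algebraMap F K b * α) := by
      rintro s hs ⟨x, hx⟩
      have hx0 : x ≠ 0 := by
        intro h0
        rw [h0, mul_zero, div_eq_iff h2, zero_mul] at hx
        have hc : c = 0 := by
          have hsa : s = -a := by linear_combination hx
          have : 2 * (b^2 * c) = 0 := by linear_combination 2*hs - 2*(s - a) * hsa
          have hb2 : b^2 ≠ 0 := pow_ne_zero _ hb
          have := (mul_eq_zero.1 this).resolve_left h2
          exact (mul_eq_zero.1 this).resolve_left hb2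
        apply hαn
        have : α ^ 2 = 0 := by rw [hα, hc, map_zero]
        exact ⟨0, by rw [map_zero]; exact (pow_eq_zero_iff two_ne_zero).1 this |>.symm⟩
      set y : F := b / (2*x) with hy
      have h2' : 2*x*y = b := by
        rw [hy]; field_simp
      have hx2 : 2*x^2 = a + s := by
        have h := hx
        rw [div_eq_iff h2] at h
        linear_combination -h
      have h1 : x^2 + y^2*c = a := by
        have h40 : (4:F) ≠ 0 := by
          rw [show (4:F) = 2*2 by norm_num]; exact mul_ne_zero h2 h2
        apply mul_right_cancel₀ (mul_ne_zero h40 (pow_ne_zero 2 hx0))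
        linear_combination c*(2*x*y + b)*h2' + (2*x^2 - a + s)*hx2 + hs
      refine ⟨algebraMap F K x + algebraMap F K y * α, ?_⟩
      rw [← h1, ← h2']
      simp only [map_add, map_mul, map_pow, map_ofNat]
      linear_combination -(algebraMap F K y)^2 * hα
    rintro ⟨s, hs, hsq | hsq⟩
    · exact main s hs hsq
    · exact main (-s) (by rw [neg_pow]; simpa using hs) (by rwa [← sub_eq_add_neg])
end

section
/- Let p be a prime, n a positive integer, b ∈ ℚ_p with ‖b‖ = (p : ℝ)⁻¹ (i.e. b has p-adic valuation 1), and a ∈ ℤ_p with ‖a‖ = 1. If there exists an element c of the quotient ring AdjoinRoot (X^n − C b) (adjoining to ℚ_p a root of X^n − C b) with c^n equal to the image of (a : ℚ_p) in AdjoinRoot (X^n − C b), then a is an n-th power modulo p: there exists z ∈ ZMod p with z^n = PadicInt.toZMod a. -/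
open Polynomial

namespace NthPowAux

noncomputable def NV (p n : ℕ) [Fact p.Prime] (x : ℚ_[p]) (d : ℕ) : ℝ := ‖x‖ ^ n * ((p:ℝ) ^ d)⁻¹

noncomputable def NC (p n : ℕ) [Fact p.Prime] (f : Polynomial ℚ_[p]) (i : ℕ) : ℝ := NV p n (f.coeff i) i

variable {p : ℕ} [Fact p.Prime] {n : ℕ}

lemma one_lt_p : (1:ℝ) < p := by exact_mod_cast (Fact.out : p.Prime).one_lt

lemma p_pos : (0:ℝ) < p := lt_trans one_pos one_lt_p

lemma NV_nonneg (x : ℚ_[p]) (d : ℕ) : 0 ≤ NV p n x d := by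
  unfold NV; positivity

lemma NV_pos {x : ℚ_[p]} (hx : x ≠ 0) (d : ℕ) : 0 < NV p n x d := by
  unfold NV
  have : 0 < ‖x‖ := norm_pos_iff.mpr hx
  have := @p_pos p _
  positivity

lemma NV_zero (hn : n ≠ 0) (d : ℕ) : NV p n (0 : ℚ_[p]) d = 0 := by
  unfold NV; rw [norm_zero, zero_pow hn, zero_mul]

lemma NV_le_NV_iff (hn : n ≠ 0) {x y : ℚ_[p]} {d : ℕ} :
    NV p n x d ≤ NV p n y d ↔ ‖x‖ ≤ ‖y‖ := by
  unfold NV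
  rw [mul_le_mul_iff_left₀ (by have := @p_pos p _; positivity)]
  exact pow_le_pow_iff_left₀ (norm_nonneg _) (norm_nonneg _) hn

lemma NV_lt_NV_iff (hn : n ≠ 0) {x y : ℚ_[p]} {d : ℕ} :
    NV p n x d < NV p n y d ↔ ‖x‖ < ‖y‖ := by
  unfold NV
  rw [mul_lt_mul_iff_left₀ (by have := @p_pos p _; positivity)]
  exact pow_lt_pow_iff_left₀ (norm_nonneg _) (norm_nonneg _) hn

lemma NV_congr {x y : ℚ_[p]} (h : ‖x‖ = ‖y‖) (d : ℕ) : NV p n x d = NV p n y d := by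
  unfold NV; rw [h]

lemma NV_neg (x : ℚ_[p]) (d : ℕ) : NV p n (-x) d = NV p n x d :=
  NV_congr (norm_neg x) d

lemma NV_mul (x y : ℚ_[p]) (d e : ℕ) :
    NV p n (x * y) (d + e) = NV p n x d * NV p n y e := by
  unfold NV
  rw [norm_mul, mul_pow, pow_add, mul_inv]
  ring

lemma NV_add_le (hn : n ≠ 0) (x y : ℚ_[p]) (d : ℕ) :
    NV p n (x + y) d ≤ max (NV p n x d) (NV p n y d) := by
  rcases le_total ‖x‖ ‖y‖ with h|h
  · refine le_trans ?_ (le_max_right _ _)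
    rw [NV_le_NV_iff hn]
    exact le_trans (Padic.nonarchimedean x y) (by rw [max_eq_right h])
  · refine le_trans ?_ (le_max_left _ _)
    rw [NV_le_NV_iff hn]
    exact le_trans (Padic.nonarchimedean x y) (by rw [max_eq_left h])

lemma NV_add_eq (hn : n ≠ 0) {x y : ℚ_[p]} {d : ℕ} (h : NV p n y d < NV p n x d) :
    NV p n (x + y) d = NV p n x d := by
  have hxy : ‖y‖ < ‖x‖ := (NV_lt_NV_iff hn).mp h
  refine NV_congr ?_ d
  rw [Padic.add_eq_max_of_ne (by exact (ne_of_lt hxy).symm), max_eq_left hxy.le]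

lemma NV_sub_eq_left (hn : n ≠ 0) {x y : ℚ_[p]} {d : ℕ} (h : NV p n y d < NV p n x d) :
    NV p n (x - y) d = NV p n x d := by
  rw [sub_eq_add_neg]
  exact NV_add_eq hn (by rwa [NV_neg])

lemma NV_sub_eq_right (hn : n ≠ 0) {x y : ℚ_[p]} {d : ℕ} (h : NV p n x d < NV p n y d) :
    NV p n (x - y) d = NV p n y d := by
  rw [sub_eq_add_neg, add_comm]
  rw [show NV p n y d = NV p n (-y) d from (NV_neg y d).symm] at h ⊢
  exact NV_add_eq hn h

lemma NV_sub_le (hn : n ≠ 0) (x y : ℚ_[p]) (d : ℕ) :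
    NV p n (x - y) d ≤ max (NV p n x d) (NV p n y d) := by
  rw [sub_eq_add_neg]
  simpa [NV_neg] using NV_add_le hn x (-y) d

lemma norm_sum_le {ι : Type*} (s : Finset ι) (F : ι → ℚ_[p]) {Cb : ℝ} (hC : 0 ≤ Cb)
    (h : ∀ i ∈ s, ‖F i‖ ≤ Cb) : ‖∑ i ∈ s, F i‖ ≤ Cb := by
  classical
  induction s using Finset.induction_on with
  | empty => simpa using hC
  | @insert a s hx ih =>
    rw [Finset.sum_insert hx]
    refine le_trans (Padic.nonarchimedean _ _) (max_le ?_ ?_)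
    · exact h a (Finset.mem_insert_self _ _)
    · exact ih (fun i hi => h i (Finset.mem_insert_of_mem hi))

lemma norm_sum_exists {ι : Type*} (s : Finset ι) (hs : s.Nonempty) (F : ι → ℚ_[p]) :
    ∃ m ∈ s, ‖∑ i ∈ s, F i‖ ≤ ‖F m‖ := by
  obtain ⟨m, hm, hmax⟩ := s.exists_max_image (fun i => ‖F i‖) hs
  exact ⟨m, hm, norm_sum_le s F (norm_nonneg _) hmax⟩

lemma norm_sum_eq {ι : Type*} (s : Finset ι) (F : ι → ℚ_[p]) (i₀ : ι) (hi₀ : i₀ ∈ s)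
    (h : ∀ i ∈ s, i ≠ i₀ → ‖F i‖ < ‖F i₀‖) : ‖∑ i ∈ s, F i‖ = ‖F i₀‖ := by
  classical
  rw [← Finset.add_sum_erase s F hi₀]
  rcases (s.erase i₀).eq_empty_or_nonempty with he|he
  · rw [he]; simp
  · obtain ⟨m, hm, hle⟩ := norm_sum_exists _ he F
    have hmlt : ‖F m‖ < ‖F i₀‖ := h m (Finset.mem_of_mem_erase hm) (Finset.ne_of_mem_erase hm)
    have hrest : ‖∑ i ∈ (s.erase i₀), F i‖ < ‖F i₀‖ := lt_of_le_of_lt hle hmlt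
    rw [Padic.add_eq_max_of_ne (ne_of_lt hrest).symm, max_eq_left hrest.le]


lemma NC_apply (f : Polynomial ℚ_[p]) (i : ℕ) : NC p n f i = ‖f.coeff i‖ ^ n * ((p:ℝ) ^ i)⁻¹ := rfl

lemma NC_nonneg (f : Polynomial ℚ_[p]) (i : ℕ) : 0 ≤ NC p n f i := NV_nonneg _ _

lemma NC_pos {f : Polynomial ℚ_[p]} {i : ℕ} (h : f.coeff i ≠ 0) : 0 < NC p n f i := NV_pos h i

lemma NC_eq_zero (hn : n ≠ 0) {f : Polynomial ℚ_[p]} {i : ℕ} (h : f.coeff i = 0) :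
    NC p n f i = 0 := by unfold NC; rw [h]; exact NV_zero hn i

lemma coeff_ne_zero_of_NC_pos (hn : n ≠ 0) {f : Polynomial ℚ_[p]} {i : ℕ}
    (h : 0 < NC p n f i) : f.coeff i ≠ 0 := by
  intro h0; rw [NC_eq_zero hn h0] at h; exact lt_irrefl _ h

lemma NC_eq_zpow {f : Polynomial ℚ_[p]} {i : ℕ} (hi : f.coeff i ≠ 0) :
    NC p n f i = (p:ℝ) ^ (-((n:ℤ) * (f.coeff i).valuation + i)) := by
  rw [NC_apply, Padic.norm_eq_zpow_neg_valuation hi]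
  rw [← zpow_natCast ((p:ℝ) ^ (-(f.coeff i).valuation)) n, ← zpow_mul]
  rw [← zpow_natCast (p:ℝ) i, ← zpow_neg]
  rw [← zpow_add₀ (ne_of_gt (@p_pos p _))]
  congr 1
  ring

lemma zpow_p_inj : Function.Injective (fun k : ℤ => (p:ℝ) ^ k) :=
  (zpow_right_strictMono₀ (@one_lt_p p _)).injective

lemma int_eq_of_mul (a bz : ℤ) (i j : ℕ) (hi : (i:ℤ) < n) (hj : (j:ℤ) < n)
    (h : (n:ℤ) * a + i = n * bz + j) : i = j := by
  have hd : (n:ℤ) ∣ ((i:ℤ) - j) := ⟨bz - a, by linarith⟩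
  have : ((i:ℤ) - j) = 0 := Int.eq_zero_of_abs_lt_dvd hd (by
    rw [abs_lt]; constructor <;> [linarith [Int.ofNat_nonneg j]; linarith [Int.ofNat_nonneg i]])
  omega

lemma NC_inj (hn : 0 < n) {f : Polynomial ℚ_[p]} {i j : ℕ}
    (hi : f.coeff i ≠ 0) (hj : f.coeff j ≠ 0) (hi' : i < n) (hj' : j < n)
    (h : NC p n f i = NC p n f j) : i = j := by
  rw [NC_eq_zpow hi, NC_eq_zpow hj] at h
  have := zpow_p_inj h
  simp only [neg_inj] at this
  exact int_eq_of_mul _ _ i j (by exact_mod_cast hi') (by exact_mod_cast hj') this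

lemma NC_max_unit (hn : 0 < n) {f : Polynomial ℚ_[p]} {i : ℕ}
    (hi : f.coeff i ≠ 0) (hi' : i < n) (h : (NC p n f i) ^ n = 1) :
    i = 0 ∧ ‖f.coeff i‖ = 1 := by
  have h1 : NC p n f i = 1 := by
    have h0 : 0 < NC p n f i := NC_pos hi
    rcases lt_trichotomy (NC p n f i) 1 with hlt|heq|hgt
    · exfalso; nlinarith [pow_lt_one₀ (le_of_lt h0) hlt hn.ne']
    · exact heq
    · exfalso; nlinarith [one_lt_pow₀ hgt hn.ne']
  rw [NC_eq_zpow hi] at h1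
  have h2 : (p:ℝ) ^ (-((n:ℤ) * (f.coeff i).valuation + i)) = (p:ℝ) ^ (0:ℤ) := by
    rw [h1, zpow_zero]
  have h3 := zpow_p_inj h2
  simp only [neg_eq_zero] at h3
  -- n * v + i = 0, 0 ≤ i < n ⇒ v = 0 and i = 0
  set v := (f.coeff i).valuation with hv
  have hveq : v = 0 ∧ (i:ℤ) = 0 := by
    rcases lt_trichotomy v 0 with hlt|heq|hgt
    · exfalso
      have : (n:ℤ) * v ≤ -n := by nlinarith [Int.lt_iff_add_one_le.mp hlt]
      have hin : (i:ℤ) < n := by exact_mod_cast hi'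
      omega
    · constructor
      · exact heq
      · rw [heq, mul_zero, zero_add] at h3; exact h3
    · exfalso
      have : (n:ℤ) * v ≥ n := by nlinarith [Int.lt_iff_add_one_le.mp hgt]
      have : (0:ℤ) ≤ i := Int.ofNat_nonneg i
      omega
  have hi0 : i = 0 := by exact_mod_cast hveq.2
  refine ⟨hi0, ?_⟩
  rw [Padic.norm_eq_zpow_neg_valuation hi, ← hv, hveq.1, neg_zero, zpow_zero]

lemma mul_aux {a b c d : ℝ} (h1 : a ≤ b) (h2 : c ≤ d) (h3 : a < b ∨ c < d)
    (ha : 0 ≤ a) (hc : 0 ≤ c) (hb : 0 < b) (hd : 0 < d) : a * c < b * d := by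
  rcases h3 with h|h
  · nlinarith
  · nlinarith

lemma NC_mul_max (hn : 0 < n) {u v : Polynomial ℚ_[p]} {i₀ j₀ : ℕ}
    (hu : ∀ i, i ≠ i₀ → NC p n u i < NC p n u i₀)
    (hv : ∀ j, j ≠ j₀ → NC p n v j < NC p n v j₀) :
    NC p n (u*v) (i₀+j₀) = NC p n u i₀ * NC p n v j₀ ∧
      ∀ d, d ≠ i₀ + j₀ → NC p n (u*v) d < NC p n u i₀ * NC p n v j₀ := by
  have hupos : 0 < NC p n u i₀ := lt_of_le_of_lt (NC_nonneg u (i₀+1)) (hu (i₀+1) (by omega))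
  have hvpos : 0 < NC p n v j₀ := lt_of_le_of_lt (NC_nonneg v (j₀+1)) (hv (j₀+1) (by omega))
  have key : ∀ (i j d : ℕ), i + j = d →
      NV p n (u.coeff i * v.coeff j) d = NC p n u i * NC p n v j := by
    intro i j d hij
    subst hij
    exact NV_mul _ _ _ _
  have strict : ∀ i j : ℕ, (i, j) ≠ (i₀, j₀) →
      NC p n u i * NC p n v j < NC p n u i₀ * NC p n v j₀ := by
    intro i j hij
    rcases eq_or_ne i i₀ with hi|hi
    · subst hi
      have hj : j ≠ j₀ := fun h => hij (by rw [h])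
      exact mul_aux (le_refl _) (hv j hj).le (Or.inr (hv j hj)) hupos.le (NC_nonneg _ _)
        hupos hvpos
    · refine mul_aux (hu i hi).le ?_ (Or.inl (hu i hi)) (NC_nonneg _ _) (NC_nonneg _ _)
        hupos hvpos
      rcases eq_or_ne j j₀ with hj|hj
      · rw [hj]
      · exact (hv j hj).le
  constructor
  · show NV p n ((u*v).coeff (i₀+j₀)) (i₀+j₀) = _
    rw [coeff_mul]
    have hmem : ((i₀, j₀) : ℕ × ℕ) ∈ Finset.HasAntidiagonal.antidiagonal (i₀ + j₀) :=
      Finset.HasAntidiagonal.mem_antidiagonal.mpr rfl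
    have hnorm := norm_sum_eq (Finset.HasAntidiagonal.antidiagonal (i₀+j₀))
      (fun x => u.coeff x.1 * v.coeff x.2) (i₀, j₀) hmem (by
        intro x hx hne
        have hxd : x.1 + x.2 = i₀ + j₀ := Finset.HasAntidiagonal.mem_antidiagonal.mp hx
        have h1 : NV p n (u.coeff x.1 * v.coeff x.2) (i₀+j₀) <
            NV p n (u.coeff i₀ * v.coeff j₀) (i₀+j₀) := by
          rw [key x.1 x.2 _ hxd, key i₀ j₀ _ rfl]
          exact strict x.1 x.2 (by rwa [← Prod.mk.eta (p := x)] at hne)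
        exact (NV_lt_NV_iff hn.ne').mp h1)
    rw [NV_congr hnorm, key i₀ j₀ _ rfl]
  · intro d hd
    show NV p n ((u*v).coeff d) d < _
    rw [coeff_mul]
    obtain ⟨m, hm, hle⟩ := norm_sum_exists (Finset.HasAntidiagonal.antidiagonal d)
      ⟨(0, d), Finset.HasAntidiagonal.mem_antidiagonal.mpr (zero_add d)⟩
      (fun x => u.coeff x.1 * v.coeff x.2)
    have hmd : m.1 + m.2 = d := Finset.HasAntidiagonal.mem_antidiagonal.mp hm
    calc NV p n (∑ x ∈ Finset.HasAntidiagonal.antidiagonal d, u.coeff x.1 * v.coeff x.2) d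
        ≤ NV p n (u.coeff m.1 * v.coeff m.2) d := (NV_le_NV_iff hn.ne').mpr hle
      _ = NC p n u m.1 * NC p n v m.2 := key m.1 m.2 d hmd
      _ < _ := strict m.1 m.2 (by
          intro h
          apply hd
          rw [← hmd, show m = (m.1, m.2) from rfl, h])

lemma NC_pow_max (hn : 0 < n) {g : Polynomial ℚ_[p]} {i₀ : ℕ}
    (hu : ∀ i, i ≠ i₀ → NC p n g i < NC p n g i₀) :
    ∀ k, 0 < k → NC p n (g^k) (k*i₀) = (NC p n g i₀)^k ∧
      ∀ d, d ≠ k*i₀ → NC p n (g^k) d < (NC p n g i₀)^k := by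
  intro k
  induction k with
  | zero => omega
  | succ k ih =>
    intro _
    rcases Nat.eq_zero_or_pos k with rfl|hk
    · simpa using hu
    · obtain ⟨h1, h2⟩ := ih hk
      have h2' : ∀ i, i ≠ k*i₀ → NC p n (g^k) i < NC p n (g^k) (k*i₀) := by
        intro i hi; rw [h1]; exact h2 i hi
      obtain ⟨H1, H2⟩ := NC_mul_max hn h2' hu
      rw [h1] at H1 H2
      constructor
      · rw [pow_succ, show (k+1)*i₀ = k*i₀ + i₀ by ring, H1, pow_succ]
      · intro d hd
        rw [pow_succ, pow_succ]
        exact H2 d (by rw [show k*i₀ + i₀ = (k+1)*i₀ by ring]; exact hd)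

lemma exists_unique_max (hn : 0 < n) {g : Polynomial ℚ_[p]} (hg : g ≠ 0)
    (hdeg : g.natDegree < n) :
    ∃ i₀, g.coeff i₀ ≠ 0 ∧ i₀ < n ∧ ∀ i, i ≠ i₀ → NC p n g i < NC p n g i₀ := by
  obtain ⟨i₀, hmem, hmax⟩ := (Finset.range (g.natDegree+1)).exists_max_image
    (fun i => NC p n g i) ⟨0, by simp⟩
  have hmax' : ∀ i, NC p n g i ≤ NC p n g i₀ := by
    intro i
    by_cases h : i ≤ g.natDegree
    · exact hmax i (Finset.mem_range.mpr (by omega))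
    · rw [NC_eq_zero hn.ne' (coeff_eq_zero_of_natDegree_lt (by omega))]
      exact le_trans (NC_nonneg g g.natDegree) (hmax _ (Finset.mem_range.mpr (by omega)))
  have hpos : 0 < NC p n g i₀ :=
    lt_of_lt_of_le (NC_pos (mt leadingCoeff_eq_zero.mp hg)) (hmax' _)
  have hco : g.coeff i₀ ≠ 0 := coeff_ne_zero_of_NC_pos hn.ne' hpos
  have hi₀n : i₀ < n := lt_of_le_of_lt (le_natDegree_of_ne_zero hco) hdeg
  refine ⟨i₀, hco, hi₀n, fun i hi => ?_⟩
  rcases eq_or_ne (g.coeff i) 0 with h|h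
  · rw [NC_eq_zero hn.ne' h]; exact hpos
  · rcases lt_or_eq_of_le (hmax' i) with hlt|heq
    · exact hlt
    · exact absurd (NC_inj hn h hco (lt_of_le_of_lt (le_natDegree_of_ne_zero h) hdeg) hi₀n heq) hi

lemma no_unique_max (hn : 0 < n) {b : ℚ_[p]} (hb : ‖b‖ = (p:ℝ)⁻¹) (q : Polynomial ℚ_[p])
    (d₀ : ℕ)
    (hmax : ∀ d, d ≠ d₀ → NC p n ((X^n - C b) * q) d < NC p n ((X^n - C b) * q) d₀) :
    False := by
  classical
  have hco : ∀ d, ((X^n - C b) * q).coeff d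
      = (if n ≤ d then q.coeff (d-n) else 0) - b * q.coeff d := by
    intro d
    rw [sub_mul, coeff_sub, coeff_C_mul]
    congr 1
    rw [show (X^n : Polynomial ℚ_[p]) * q = q * X^n from mul_comm _ _, coeff_mul_X_pow']
  rcases eq_or_ne q 0 with rfl|hq
  · have := hmax (d₀+1) (by omega)
    rw [mul_zero] at this
    rw [NC_eq_zero hn.ne' (coeff_zero _), NC_eq_zero hn.ne' (coeff_zero _)] at this
    exact lt_irrefl _ this
  -- conversions
  have hbq : ∀ d, NV p n (b * q.coeff d) d = ((p:ℝ)^n)⁻¹ * NC p n q d := by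
    intro d
    rw [NC_apply]
    unfold NV
    rw [norm_mul, mul_pow, hb, inv_pow]
    ring
  have hsh : ∀ d, n ≤ d → NV p n (q.coeff (d-n)) d = ((p:ℝ)^n)⁻¹ * NC p n q (d-n) := by
    intro d hd
    rw [NC_apply]
    unfold NV
    rw [show (p:ℝ)^d = (p:ℝ)^(d-n) * (p:ℝ)^n by rw [← pow_add]; congr 1; omega, mul_inv]
    ring
  -- max of NC q
  obtain ⟨j₁, hj₁mem, hj₁⟩ := (Finset.range (q.natDegree+1)).exists_max_image
    (fun i => NC p n q i) ⟨0, by simp⟩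
  set M := NC p n q j₁ with hM
  have hMall : ∀ i, NC p n q i ≤ M := by
    intro i
    by_cases h : i ≤ q.natDegree
    · exact hj₁ i (Finset.mem_range.mpr (by omega))
    · rw [NC_eq_zero hn.ne' (coeff_eq_zero_of_natDegree_lt (by omega))]
      exact le_trans (NC_nonneg q q.natDegree) (hj₁ _ (Finset.mem_range.mpr (by omega)))
  have hMpos : 0 < M :=
    lt_of_lt_of_le (NC_pos (mt leadingCoeff_eq_zero.mp hq)) (hMall _)
  set P : ℕ → Prop := fun i => NC p n q i = M with hP
  have hPex : ∃ i, P i := ⟨j₁, rfl⟩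
  set jmin := Nat.find hPex with hjmin
  have hPjmin : NC p n q jmin = M := Nat.find_spec hPex
  set jmax := Nat.findGreatest P q.natDegree with hjmax
  have hj₁le : j₁ ≤ q.natDegree := by
    have : q.coeff j₁ ≠ 0 := coeff_ne_zero_of_NC_pos hn.ne' (hM ▸ hMpos)
    exact le_natDegree_of_ne_zero this
  have hPjmax : NC p n q jmax = M := Nat.findGreatest_spec (P := P) hj₁le (show P j₁ from rfl)
  have hjmaxgt : ∀ i, jmax < i → NC p n q i < M := by
    intro i hi
    by_cases h : i ≤ q.natDegree
    · exact lt_of_le_of_ne (hMall i) (Nat.findGreatest_is_greatest hi h)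
    · rw [NC_eq_zero hn.ne' (coeff_eq_zero_of_natDegree_lt (by omega))]
      exact hMpos
  have hjminle : jmin ≤ jmax := by
    refine Nat.le_findGreatest ?_ hPjmin
    exact le_natDegree_of_ne_zero (coeff_ne_zero_of_NC_pos hn.ne' (hPjmin ▸ hMpos))
  set K := ((p:ℝ)^n)⁻¹ * M with hK
  have hKpos : 0 < K := by
    have := @p_pos p _
    positivity
  -- upper bound
  have hKtop : ∀ d, NC p n ((X^n - C b) * q) d ≤ K := by
    intro d
    show NV p n _ d ≤ K
    rw [hco d]
    refine le_trans (NV_sub_le hn.ne' _ _ _) (max_le ?_ ?_)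
    · by_cases h : n ≤ d
      · rw [if_pos h, hsh d h]
        exact mul_le_mul_of_nonneg_left (hMall _) (by positivity)
      · rw [if_neg h, NV_zero hn.ne']
        exact hKpos.le
    · rw [hbq d]
      exact mul_le_mul_of_nonneg_left (hMall _) (by positivity)
  -- value at jmin
  have hatmin : NC p n ((X^n - C b) * q) jmin = K := by
    show NV p n _ jmin = K
    rw [hco jmin]
    have hdom : NV p n (if n ≤ jmin then q.coeff (jmin-n) else 0) jmin
        < NV p n (b * q.coeff jmin) jmin := by
      rw [hbq jmin, hPjmin]
      by_cases h : n ≤ jmin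
      · rw [if_pos h, hsh jmin h]
        refine mul_lt_mul_of_pos_left ?_ (by have := @p_pos p _; positivity)
        refine lt_of_le_of_ne (hMall _) ?_
        exact Nat.find_min hPex (by omega)
      · rw [if_neg h, NV_zero hn.ne']
        exact hKpos
    rw [NV_sub_eq_right hn.ne' hdom, hbq jmin, hPjmin]
  -- value at jmax + n
  have hatmax : NC p n ((X^n - C b) * q) (jmax + n) = K := by
    show NV p n _ (jmax + n) = K
    rw [hco (jmax + n)]
    have h1 : n ≤ jmax + n := by omega
    have hdom : NV p n (b * q.coeff (jmax + n)) (jmax + n)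
        < NV p n (if n ≤ jmax + n then q.coeff (jmax + n - n) else 0) (jmax + n) := by
      rw [if_pos h1, hsh _ h1, show jmax + n - n = jmax by omega, hPjmax, hbq]
      exact mul_lt_mul_of_pos_left (hjmaxgt _ (by omega)) (by have := @p_pos p _; positivity)
    rw [NV_sub_eq_left hn.ne' hdom, if_pos h1, hsh _ h1,
      show jmax + n - n = jmax by omega, hPjmax]
  -- contradiction
  rcases eq_or_ne d₀ jmin with rfl|hne
  · have h2 := hmax (jmax + n) (by omega)
    rw [hatmax, hatmin] at h2
    exact lt_irrefl _ h2
  · have h2 := hmax jmin (Ne.symm hne)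
    rw [hatmin] at h2
    exact lt_irrefl _ (lt_of_lt_of_le h2 (hKtop d₀))

end NthPowAux

open NthPowAux in
/-- If a `p`-adic unit `a` becomes an `n`-th power after adjoining to `ℚ_p` a root of
`Xⁿ − b`, where `b` has `p`-adic valuation `1`, then `a` is an `n`-th power modulo
`p`. -/
theorem nth_power_mod_p_of_nth_power_in_adjoinRoot
    (p : ℕ) [Fact p.Prime] (n : ℕ) (hn : 0 < n)
    (b : ℚ_[p]) (hb : ‖b‖ = (p : ℝ)⁻¹) (a : ℤ_[p]) (ha : ‖a‖ = 1)
    (h : ∃ c : AdjoinRoot (X ^ n - C b),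
      c ^ n = algebraMap ℚ_[p] (AdjoinRoot (X ^ n - C b)) (a : ℚ_[p])) :
    ∃ z : ZMod p, z ^ n = PadicInt.toZMod a := by
  classical
  set f : Polynomial ℚ_[p] := X ^ n - C b with hf
  obtain ⟨c, hc⟩ := h
  have hfm : f.Monic := monic_X_pow_sub_C b hn.ne'
  have hfdeg : f.degree = n := degree_X_pow_sub_C hn b
  have hanorm : ‖(a : ℚ_[p])‖ = 1 := by rw [← PadicInt.norm_def]; exact ha
  have hane : (a : ℚ_[p]) ≠ 0 := by
    intro h0; rw [h0, norm_zero] at hanorm; norm_num at hanorm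
  obtain ⟨g₀, hg₀⟩ := AdjoinRoot.mk_surjective c
  set g := g₀ %ₘ f with hg
  have hmkg : AdjoinRoot.mk f g = c := by
    rw [← hg₀, AdjoinRoot.mk_eq_mk]
    exact ⟨-(g₀ /ₘ f), by rw [hg, modByMonic_eq_sub_mul_div _ f]; ring⟩
  have hdvd : f ∣ g ^ n - C (a : ℚ_[p]) := by
    rw [← AdjoinRoot.mk_eq_zero, map_sub, map_pow, hmkg, hc]
    have h2 : algebraMap ℚ_[p] (AdjoinRoot f) ((a : ℚ_[p])) = AdjoinRoot.mk f (C (a:ℚ_[p])) := by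
      rw [AdjoinRoot.algebraMap_eq]; rfl
    rw [h2, sub_self]
  obtain ⟨q, hq⟩ := hdvd
  have hgne : g ≠ 0 := by
    intro h0
    rw [h0, zero_pow hn.ne', zero_sub] at hq
    have hdvd2 : f ∣ C ((a : ℚ_[p])) := ⟨-q, by rw [mul_neg, ← hq, neg_neg]⟩
    have := degree_le_of_dvd hdvd2 (by simpa using hane)
    rw [hfdeg, degree_C hane] at this
    exact absurd this (by simp [hn.ne'] )
  have hgdeg : g.natDegree < n := by
    rw [natDegree_lt_iff_degree_lt hgne]
    rw [← hfdeg]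
    exact degree_modByMonic_lt g₀ hfm
  obtain ⟨i₀, hco, hi₀n, hmaxg⟩ := exists_unique_max hn hgne hgdeg
  obtain ⟨hpow1, hpow2⟩ := NC_pow_max hn hmaxg n hn
  have hVpos : 0 < NC p n g i₀ := NC_pos hco
  have hNa : NV p n ((a : ℚ_[p])) 0 = 1 := by
    unfold NV; rw [hanorm, one_pow, pow_zero, inv_one, mul_one]
  have hcoeff_ne : ∀ d, d ≠ 0 → (g^n - C ((a:ℚ_[p]))).coeff d = (g^n).coeff d := by
    intro d hd; rw [coeff_sub, coeff_C, if_neg hd, sub_zero]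
  have hNCne : ∀ d, d ≠ 0 → NC p n (g^n - C ((a:ℚ_[p]))) d = NC p n (g^n) d := by
    intro d hd; unfold NC; rw [hcoeff_ne d hd]
  have hgn0 : (g^n).coeff 0 = (g.coeff 0)^n := by
    rw [coeff_zero_eq_eval_zero, eval_pow, ← coeff_zero_eq_eval_zero]
  have hc0 : (g^n - C ((a:ℚ_[p]))).coeff 0 = (g.coeff 0)^n - (a:ℚ_[p]) := by
    rw [coeff_sub, coeff_C, if_pos rfl, hgn0]
  have hkey : i₀ = 0 ∧ ‖g.coeff i₀‖ = 1 := by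
    rcases lt_trichotomy ((NC p n g i₀)^n) 1 with hV|hV|hV
    · exfalso
      refine no_unique_max hn hb q 0 ?_
      rw [← hf, ← hq]
      intro d hd
      have hub : ∀ e, NC p n (g^n) e ≤ (NC p n g i₀)^n := by
        intro e
        rcases eq_or_ne e (n*i₀) with rfl|hdn
        · exact le_of_eq hpow1
        · exact (hpow2 e hdn).le
      have h0' : NC p n (g^n - C ((a:ℚ_[p]))) 0 = 1 := by
        show NV p n _ 0 = 1
        rw [hc0]
        rw [NV_sub_eq_right hn.ne' ?_, hNa]
        rw [show ((g.coeff 0)^n) = (g^n).coeff 0 from hgn0.symm, hNa]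
        calc NC p n (g^n) 0 ≤ (NC p n g i₀)^n := hub 0
          _ < 1 := hV
      rw [h0', hNCne d hd]
      exact lt_of_le_of_lt (hub d) hV
    · exact NC_max_unit hn hco hi₀n hV
    · exfalso
      refine no_unique_max hn hb q (n*i₀) ?_
      rw [← hf, ← hq]
      have hd₀ : NC p n (g^n - C ((a:ℚ_[p]))) (n*i₀) = (NC p n g i₀)^n := by
        rcases eq_or_ne (n*i₀) 0 with h00|h00
        · rw [h00]
          show NV p n _ 0 = _
          rw [hc0]
          have hdom : NV p n ((a:ℚ_[p])) 0 < NV p n ((g.coeff 0)^n) 0 := by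
            rw [hNa, show ((g.coeff 0)^n) = (g^n).coeff 0 from hgn0.symm]
            show 1 < NC p n (g^n) 0
            rw [show (0:ℕ) = n*i₀ from h00.symm, hpow1]
            exact hV
          rw [NV_sub_eq_left hn.ne' hdom,
            show ((g.coeff 0)^n) = (g^n).coeff 0 from hgn0.symm]
          show NC p n (g^n) 0 = _
          rw [show (0:ℕ) = n*i₀ from h00.symm, hpow1]
        · rw [hNCne _ h00]; exact hpow1
      intro d hd
      rw [hd₀]
      rcases eq_or_ne d 0 with rfl|hd0
      · show NV p n _ 0 < _
        rw [hc0]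
        refine lt_of_le_of_lt (NV_sub_le hn.ne' _ _ _) (max_lt ?_ ?_)
        · rw [show ((g.coeff 0)^n) = (g^n).coeff 0 from hgn0.symm]
          exact hpow2 0 hd
        · rw [hNa]; exact hV
      · rw [hNCne d hd0]
        exact hpow2 d hd
  obtain ⟨hi₀0, hxnorm⟩ := hkey
  subst hi₀0
  have hlt : ‖(g.coeff 0)^n - (a:ℚ_[p])‖ < 1 := by
    by_contra hge
    push_neg at hge
    have hub : ‖(g.coeff 0)^n - (a:ℚ_[p])‖ ≤ 1 := by
      rw [sub_eq_add_neg]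
      refine le_trans (Padic.nonarchimedean _ _) (max_le ?_ ?_)
      · rw [norm_pow, hxnorm, one_pow]
      · rw [norm_neg, hanorm]
    have heq : ‖(g.coeff 0)^n - (a:ℚ_[p])‖ = 1 := le_antisymm hub hge
    refine no_unique_max hn hb q 0 ?_
    rw [← hf, ← hq]
    intro d hd
    have h0' : NC p n (g^n - C ((a:ℚ_[p]))) 0 = 1 := by
      show NV p n _ 0 = 1
      rw [hc0]
      unfold NV
      rw [heq, one_pow, pow_zero, inv_one, mul_one]
    rw [h0', hNCne d hd]
    have hlt2 := hpow2 d (by simpa using hd)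
    have hV1 : NC p n g 0 = 1 := by
      rw [NC_apply, hxnorm, one_pow, pow_zero, inv_one, mul_one]
    rw [hV1, one_pow] at hlt2
    exact hlt2
  set x' : ℤ_[p] := ⟨g.coeff 0, hxnorm.le⟩ with hx'
  have hlt' : ‖x'^n - a‖ < 1 := by
    rw [PadicInt.norm_def]
    have hcast : (((x'^n - a : ℤ_[p])) : ℚ_[p]) = (g.coeff 0)^n - (a:ℚ_[p]) := by
      push_cast
      rfl
    rw [hcast]
    exact hlt
  have hker : PadicInt.toZMod (x'^n - a) = 0 := by
    rw [← RingHom.mem_ker, PadicInt.ker_toZMod, IsLocalRing.mem_maximalIdeal]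
    exact PadicInt.mem_nonunits.mpr hlt'
  refine ⟨PadicInt.toZMod x', ?_⟩
  have h2 : PadicInt.toZMod (x'^n) - PadicInt.toZMod a = 0 := by
    rw [← map_sub]; exact hker
  rw [← map_pow]
  exact sub_eq_zero.mp h2
end
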